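/- arXiv:1708.08773 — 6 statements merged into one kernel-verified Lean document; each statement's English description precedes it below -/
import Mathlib

section
/- Let q ≥ 2 be an integer. The continuous group homomorphism Ẑ → ∏_{l prime, l ∤ q} ℤ_l^× determined by sending 1 ∈ ℤ ⊆ Ẑ to the element (q)_l is injective. -/
open Finset

instance (p : Nat.Primes) : Fact (p : ℕ).Prime := ⟨p.2⟩

/-- The profinite completion `Ẑ` of `ℤ`, realized as the product `∏_l ℤ_l`
over all primes `l`. -/
abbrev ZHat : Type := ∀ p : Nat.Primes, ℤ_[(p : ℕ)]

/-- The primes not dividing `q`. -/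
abbrev PrimesNotDvd (q : ℕ) : Type := {p : Nat.Primes // ¬ ((p : ℕ) ∣ q)}

/-! ### Auxiliary lemmas -/

lemma aux_continuous_toZModPow (p : ℕ) [hp : Fact p.Prime] (k : ℕ) :
    Continuous (PadicInt.toZModPow (p := p) k) := by
  rw [continuous_def]
  intro s _
  rw [Metric.isOpen_iff]
  intro x hx
  have hppos : (0 : ℝ) < (p : ℝ) := by exact_mod_cast hp.out.pos
  refine ⟨(p : ℝ) ^ (-(k : ℤ) + 1), zpow_pos hppos _, ?_⟩
  intro y hy
  have h1 : ‖y - x‖ ≤ (p : ℝ) ^ (-(k : ℤ)) := by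
    rw [PadicInt.norm_le_pow_iff_norm_lt_pow_add_one]
    simpa [dist_eq_norm] using hy
  have h2 : PadicInt.toZModPow k (y - x) = 0 := by
    have hker : (y - x) ∈ RingHom.ker (PadicInt.toZModPow (p := p) k) := by
      rw [PadicInt.ker_toZModPow]
      rwa [← PadicInt.norm_le_pow_iff_mem_span_pow]
    exact RingHom.mem_ker.mp hker
  have h3 : PadicInt.toZModPow k y = PadicInt.toZModPow k x := by
    rw [map_sub] at h2
    exact sub_eq_zero.mp h2
  simpa [Set.mem_preimage, h3] using hx

lemma aux_continuous_toZMod (p : ℕ) [hp : Fact p.Prime] :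
    Continuous (PadicInt.toZMod (p := p)) := by
  rw [continuous_def]
  intro s _
  rw [Metric.isOpen_iff]
  intro x hx
  refine ⟨1, one_pos, ?_⟩
  intro y hy
  have h1 : ‖y - x‖ < 1 := by simpa [dist_eq_norm] using hy
  have h2 : PadicInt.toZMod (y - x) = 0 := by
    have hker : (y - x) ∈ RingHom.ker (PadicInt.toZMod (p := p)) := by
      rw [PadicInt.ker_toZMod, PadicInt.maximalIdeal_eq_span_p, Ideal.mem_span_singleton,
        ← PadicInt.norm_lt_one_iff_dvd]
      exact h1
    exact RingHom.mem_ker.mp hker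
  have h3 : PadicInt.toZMod y = PadicInt.toZMod x := by
    rw [map_sub] at h2
    exact sub_eq_zero.mp h2
  simpa [Set.mem_preimage, h3] using hx

lemma aux_pow_sub_one_sub_mul (A : ℤ) (i : ℕ) :
    (A - 1) ^ 2 ∣ A ^ i - 1 - i * (A - 1) := by
  induction i with
  | zero => simp
  | succ n ih =>
    obtain ⟨c, hc⟩ := ih
    refine ⟨A * c + n, ?_⟩
    push_cast
    linear_combination A * hc

/-- The key arithmetic lemma: for `q ≥ 2`, `p` prime and `k ≥ 2`, there is a prime `l`
not dividing `q` such that the order of `q` mod `l` is exactly `p ^ k`. -/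
lemma aux_exists_good_prime (p q k : ℕ) (hp : p.Prime) (hq : 2 ≤ q) (hk : 2 ≤ k) :
    ∃ l : ℕ, l.Prime ∧ ¬ l ∣ q ∧ ((l : ℤ) ∣ (q : ℤ) ^ p ^ k - 1) ∧
      ¬ ((l : ℤ) ∣ (q : ℤ) ^ p ^ (k - 1) - 1) := by
  haveI : Fact p.Prime := ⟨hp⟩
  have hp2 : 2 ≤ p := hp.two_le
  set a : ℕ := q ^ p ^ (k - 1) with ha_def
  have ha2 : 2 ≤ a := hq.trans (Nat.le_self_pow (pow_ne_zero _ hp.pos.ne') q)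
  set N : ℕ := ∑ i ∈ range p, a ^ i with hN_def
  have hgeom : (N : ℤ) * ((a : ℤ) - 1) = (a : ℤ) ^ p - 1 := by
    rw [hN_def]; push_cast; exact geom_sum_mul _ _
  have hNa : (N : ℤ) ∣ (a : ℤ) ^ p - 1 := ⟨(a : ℤ) - 1, hgeom.symm⟩
  -- N > p
  obtain ⟨m, hm'⟩ : ∃ m, p = m + 1 := ⟨p - 1, by omega⟩
  have hNgt : p < N := by
    have h1 : ∑ i ∈ range m, a ^ i + a ^ m = N := by
      rw [hN_def, hm', Finset.sum_range_succ]
    have h2 : m ≤ ∑ i ∈ range m, a ^ i := by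
      calc m = ∑ _i ∈ range m, 1 := by simp
        _ ≤ _ := Finset.sum_le_sum (fun i _ => Nat.one_le_pow i a (by omega))
    have h3 : m + 1 ≤ 2 ^ m := Nat.lt_two_pow_self (n := m)
    have h4 : 2 ^ m ≤ a ^ m := Nat.pow_le_pow_left ha2 m
    omega
  -- p^2 does not divide N
  have hsq : ¬ (p * p ∣ N) := by
    intro hdvd
    have hpN : p ∣ N := dvd_trans ⟨p, rfl⟩ hdvd
    have h5 : ((a : ZMod p)) = 1 := by
      have h6 : (p : ℤ) ∣ (a : ℤ) ^ p - 1 := dvd_trans (Int.natCast_dvd_natCast.mpr hpN) hNa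
      have h7 := (ZMod.intCast_zmod_eq_zero_iff_dvd ((a : ℤ) ^ p - 1) p).mpr h6
      push_cast at h7
      rw [sub_eq_zero] at h7
      rw [← ZMod.pow_card ((a : ZMod p))]
      exact h7
    have hpa1 : (p : ℤ) ∣ (a : ℤ) - 1 := by
      apply (ZMod.intCast_zmod_eq_zero_iff_dvd _ p).mp
      push_cast
      rw [sub_eq_zero]
      exact_mod_cast h5
    rcases hp.eq_two_or_odd' with hp2' | hodd
    · -- p = 2
      subst hp2'
      have hk1 : 2 ^ (k - 1) = 2 ^ (k - 2) * 2 := by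
        rw [← pow_succ]; congr 1; omega
      set c : ℕ := q ^ 2 ^ (k - 2) with hc_def
      have hac : (a : ℤ) = (c : ℤ) ^ 2 := by
        rw [ha_def, hc_def, hk1]; push_cast [pow_mul]; ring
      have hcodd : Odd (c : ℤ) := by
        rcases Int.even_or_odd (c : ℤ) with he | ho
        · exfalso
          obtain ⟨t, ht⟩ := hpa1
          obtain ⟨s, hs⟩ := he
          have h8 : (a : ℤ) = 4 * (s * s) := by rw [hac, hs]; ring
          push_cast at ht
          omega
        · exact ho
      obtain ⟨t, ht⟩ := hcodd
      have hN2 : (N : ℤ) = (a : ℤ) + 1 := by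
        rw [hN_def]
        push_cast [Finset.sum_range_succ, Finset.sum_range_zero]
        ring
      have h4N : (4 : ℤ) ∣ (N : ℤ) := by
        have hdvd4 : (4 : ℕ) ∣ N := by rw [show (4 : ℕ) = 2 * 2 from rfl]; exact hdvd
        exact_mod_cast Int.natCast_dvd_natCast.mpr hdvd4
      obtain ⟨s, hs⟩ := h4N
      have h9 : (N : ℤ) = 4 * (t * t + t) + 2 := by rw [hN2, hac, ht]; ring
      omega
    · -- p odd
      obtain ⟨m', hm2⟩ := hodd
      have hsum_id : (∑ i ∈ range p, (i : ℤ)) = (p : ℤ) * m' := by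
        have h9 := Finset.sum_range_id_mul_two p
        have hpm : p - 1 = 2 * m' := by omega
        have h10 : (∑ i ∈ range p, i) * 2 = (p * m') * 2 := by
          rw [h9, hpm]; ring
        have h11 : (∑ i ∈ range p, i) = p * m' := Nat.eq_of_mul_eq_mul_right (by omega) h10
        rw [← Nat.cast_sum, h11]
        push_cast
        ring
      have hterm : ((a : ℤ) - 1) ^ 2 ∣
          ((N : ℤ) - p - (∑ i ∈ range p, (i : ℤ)) * ((a : ℤ) - 1)) := by
        have hNp : (N : ℤ) - p - (∑ i ∈ range p, (i : ℤ)) * ((a : ℤ) - 1)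
            = ∑ i ∈ range p, ((a : ℤ) ^ i - 1 - i * ((a : ℤ) - 1)) := by
          rw [Finset.sum_sub_distrib, Finset.sum_sub_distrib, ← Finset.sum_mul, hN_def]
          push_cast
          rw [Finset.sum_const, Finset.card_range]
          ring
        rw [hNp]
        exact Finset.dvd_sum fun i _ => aux_pow_sub_one_sub_mul _ i
      have hp21 : (p : ℤ) ^ 2 ∣ ((a : ℤ) - 1) ^ 2 := pow_dvd_pow_of_dvd hpa1 2
      have hp22 : (p : ℤ) ^ 2 ∣ (∑ i ∈ range p, (i : ℤ)) * ((a : ℤ) - 1) := by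
        rw [hsum_id]
        obtain ⟨b, hb⟩ := hpa1
        exact ⟨m' * b, by rw [hb]; ring⟩
      have hp23 : (p : ℤ) ^ 2 ∣ (N : ℤ) - p := by
        have h12 := dvd_add (hp21.trans hterm) hp22
        have h13 : (N : ℤ) - p - (∑ i ∈ range p, (i : ℤ)) * ((a : ℤ) - 1)
            + (∑ i ∈ range p, (i : ℤ)) * ((a : ℤ) - 1) = (N : ℤ) - p := by ring
        rwa [h13] at h12
      have hp24 : (p : ℤ) ^ 2 ∣ (N : ℤ) := by
        have := Int.natCast_dvd_natCast.mpr hdvd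
        push_cast at this
        rwa [← sq] at this
      have hpp : (p : ℤ) ^ 2 ∣ (p : ℤ) := by
        have := dvd_sub hp24 hp23
        simpa using this
      have hple : (p : ℤ) ^ 2 ≤ (p : ℤ) := Int.le_of_dvd (by positivity) hpp
      have : (2 : ℤ) ≤ (p : ℤ) := by exact_mod_cast hp2
      nlinarith
  -- there is a prime l ≠ p dividing N
  have hexl : ∃ l : ℕ, l.Prime ∧ l ∣ N ∧ l ≠ p := by
    by_contra hcon
    push_neg at hcon
    have hNe := Nat.eq_prime_pow_of_unique_prime_dvd (n := N) (p := p) (by omega)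
      (fun {d} hd hdN => hcon d hd hdN)
    set e := N.primeFactorsList.length with he
    rcases Nat.lt_or_ge e 2 with h | h
    · have hNe' : N = p ^ e := hNe
      interval_cases e
      · rw [pow_zero] at hNe'; omega
      · rw [pow_one] at hNe'; omega
    · apply hsq
      rw [hNe]
      have : p ^ 2 ∣ p ^ e := pow_dvd_pow p h
      rwa [sq] at this
  obtain ⟨l, hl, hlN, hlp⟩ := hexl
  have hlZ : (l : ℤ) ∣ (N : ℤ) := Int.natCast_dvd_natCast.mpr hlN
  have hldvd : (l : ℤ) ∣ (a : ℤ) ^ p - 1 := hlZ.trans hNa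
  have hap : (a : ℤ) ^ p = (q : ℤ) ^ p ^ k := by
    rw [ha_def]
    push_cast
    rw [← pow_mul, ← pow_succ]
    congr 1
    congr 1
    omega
  have hnd : ¬ ((l : ℤ) ∣ (a : ℤ) - 1) := by
    intro hcontra
    have hNsp : ((a : ℤ) - 1) ∣ (N : ℤ) - p := by
      have h14 : (N : ℤ) - p = ∑ i ∈ range p, ((a : ℤ) ^ i - 1) := by
        rw [Finset.sum_sub_distrib, hN_def]
        push_cast
        rw [Finset.sum_const, Finset.card_range]
        ring
      rw [h14]
      exact Finset.dvd_sum fun i _ => by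
        simpa using sub_dvd_pow_sub_pow (a : ℤ) 1 i
    have h15 : (l : ℤ) ∣ (p : ℤ) := by
      have := dvd_sub hlZ (hcontra.trans hNsp)
      simpa using this
    have h16 : l ∣ p := by exact_mod_cast h15
    exact hlp ((Nat.prime_dvd_prime_iff_eq hl hp).mp h16)
  have haq : (a : ℤ) = (q : ℤ) ^ p ^ (k - 1) := by rw [ha_def]; push_cast; ring
  refine ⟨l, hl, ?_, by rwa [← hap], by rwa [← haq]⟩
  intro hlq
  have h17 : (l : ℤ) ∣ (q : ℤ) ^ p ^ k := by
    have : l ∣ q ^ p ^ k := hlq.trans (dvd_pow_self q (pow_ne_zero _ hp.pos.ne'))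
    exact_mod_cast Int.natCast_dvd_natCast.mpr this
  have h18 : (l : ℤ) ∣ 1 := by
    have := dvd_sub h17 (hap ▸ hldvd)
    simpa using this
  have h19 : (l : ℤ) ≤ 1 := Int.le_of_dvd one_pos h18
  have := hl.two_le
  omega

/-- `ℤ` is dense in `Ẑ = ∏_p ℤ_p` (Chinese remainder theorem). -/
lemma aux_denseRange_intCast_ZHat : DenseRange (fun n : ℤ => ((n : ZHat))) := by
  apply dense_iff_inter_open.mpr
  rintro U hU ⟨x, hxU⟩
  obtain ⟨I, v, h1, h2⟩ := isOpen_pi_iff.mp hU x hxU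
  have key : ∀ i : {b : Nat.Primes // b ∈ I}, ∃ m : ℕ,
      ∀ y : ℤ_[((i : Nat.Primes) : ℕ)],
        PadicInt.toZModPow m y = PadicInt.toZModPow m (x (i : Nat.Primes)) →
          y ∈ v (i : Nat.Primes) := by
    intro i
    obtain ⟨ho, hxi⟩ := h1 (i : Nat.Primes) i.2
    obtain ⟨ε, hε, hball⟩ := Metric.isOpen_iff.mp ho _ hxi
    obtain ⟨m, hμ⟩ := PadicInt.exists_pow_neg_lt ((i : Nat.Primes) : ℕ) hε
    refine ⟨m, fun y hy => hball ?_⟩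
    rw [Metric.mem_ball, dist_eq_norm]
    calc ‖y - x (i : Nat.Primes)‖ ≤ ((i : Nat.Primes) : ℝ) ^ (-(m : ℤ)) := by
          rw [PadicInt.norm_le_pow_iff_mem_span_pow, ← PadicInt.ker_toZModPow,
            RingHom.mem_ker, map_sub, hy, sub_self]
      _ < ε := hμ
  choose m hm using key
  set K := Finset.univ.sup m with hK
  set a : {b : Nat.Primes // b ∈ I} → ℕ := fun i => ((i : Nat.Primes) : ℕ) ^ K with ha
  have hcop : Pairwise (Function.onFun Nat.Coprime a) := by
    intro i j hij
    apply Nat.Coprime.pow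
    rw [Nat.coprime_primes (i : Nat.Primes).2 (j : Nat.Primes).2]
    intro hcontra
    exact hij (Subtype.ext (Subtype.ext hcontra))
  haveI : NeZero (∏ i, a i) :=
    ⟨Finset.prod_ne_zero_iff.mpr fun i _ => pow_ne_zero _ (i : Nat.Primes).2.pos.ne'⟩
  set φ : ZMod (∏ i, a i) →+* ∀ i, ZMod (a i) :=
    Pi.ringHom (fun i => ZMod.castHom (Finset.dvd_prod_of_mem a (Finset.mem_univ i))
      (ZMod (a i))) with hφ
  have hsurj : Function.Surjective φ := by
    rw [show φ = ((ZMod.prodEquivPi a hcop : ZMod (∏ i, a i) ≃+* ∀ i, ZMod (a i)) :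
        ZMod (∏ i, a i) →+* ∀ i, ZMod (a i)) from RingHom.ext_zmod _ _]
    exact (ZMod.prodEquivPi a hcop).surjective
  obtain ⟨w, hw⟩ := hsurj fun i => PadicInt.toZModPow K (x (i : Nat.Primes))
  refine ⟨((w.val : ℤ) : ZHat), h2 ?_, ⟨(w.val : ℤ), rfl⟩⟩
  intro i hi
  set i' : {b : Nat.Primes // b ∈ I} := ⟨i, hi⟩ with hi'
  apply hm i'
  have hstepK : PadicInt.toZModPow K (((w.val : ℤ) : ZHat) i) = PadicInt.toZModPow K (x i) := by
    have e1 : (((w.val : ℤ) : ZHat) i) = ((w.val : ℤ) : ℤ_[(i : ℕ)]) := by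
      simp
    rw [e1, map_intCast]
    have e2 : (((w.val : ℤ)) : ZMod (a i')) = φ w i' := by
      rw [Int.cast_natCast, ZMod.natCast_val, hφ]
      simp [Pi.ringHom]
      rfl
    have e3 : φ w i' = PadicInt.toZModPow K (x i) := by rw [hw]
    exact e2.trans e3
  have hKm : m i' ≤ K := Finset.le_sup (Finset.mem_univ i')
  rw [← PadicInt.cast_toZModPow _ _ hKm, ← PadicInt.cast_toZModPow _ _ hKm (x i), hstepK]

/-- Let `q ≥ 2`.  Any continuous group homomorphism `Ẑ → ∏_{l ∤ q} ℤ_l^×` sending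
`1 ∈ ℤ ⊆ Ẑ` to the element `(q)_l` is injective (injectivity of the prime-to-`q`
cyclotomic character of a finite field with `q` elements). -/
theorem cyclotomic_character_injective (q : ℕ) (hq : 2 ≤ q)
    (χ : Multiplicative ZHat →* ∀ l : PrimesNotDvd q, (ℤ_[((l : Nat.Primes) : ℕ)])ˣ)
    (hcont : Continuous χ)
    (hχ : ∀ l : PrimesNotDvd q,
      ((χ (Multiplicative.ofAdd (1 : ZHat)) l : ℤ_[((l : Nat.Primes) : ℕ)])) =
        (q : ℤ_[((l : Nat.Primes) : ℕ)])) :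
    Function.Injective χ := by
  rw [injective_iff_map_eq_one]
  intro x hx
  have hcomp : ∀ (P : Nat.Primes) (k : ℕ), 2 ≤ k →
      PadicInt.toZModPow k (Multiplicative.toAdd x P) = 0 := by
    intro P k hk
    obtain ⟨l, hl, hlq, hdvd, hndvd⟩ := aux_exists_good_prime (P : ℕ) q k P.2 hq hk
    haveI : Fact l.Prime := ⟨hl⟩
    haveI hne : NeZero ((P : ℕ) ^ k) := ⟨pow_ne_zero _ P.2.pos.ne'⟩
    haveI hfact1 : Fact (1 < (P : ℕ) ^ k) := ⟨Nat.one_lt_pow (by omega) P.2.two_le⟩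
    set L : PrimesNotDvd q := ⟨⟨l, hl⟩, hlq⟩ with hL
    have hco : Nat.Coprime q l := ((Nat.Prime.coprime_iff_not_dvd hl).mpr hlq).symm
    set u : (ZMod l)ˣ := ZMod.unitOfCoprime q hco with hu_def
    have hu : ((u : ZMod l)) = (q : ZMod l) := ZMod.coe_unitOfCoprime q hco
    have hupow : u ^ (P : ℕ) ^ k = 1 := by
      apply Units.ext
      rw [Units.val_pow_eq_pow_val, hu, Units.val_one]
      have h7 := (ZMod.intCast_zmod_eq_zero_iff_dvd ((q : ℤ) ^ (P : ℕ) ^ k - 1) l).mpr hdvd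
      push_cast at h7
      rwa [sub_eq_zero] at h7
    have hunot : u ^ (P : ℕ) ^ (k - 1) ≠ 1 := by
      intro hcon
      apply hndvd
      rw [← ZMod.intCast_zmod_eq_zero_iff_dvd]
      push_cast
      rw [sub_eq_zero]
      have h8 := congrArg (Units.val) hcon
      rw [Units.val_pow_eq_pow_val, hu, Units.val_one] at h8
      exact_mod_cast h8
    have horder : orderOf u = (P : ℕ) ^ k := by
      have h1 := orderOf_eq_prime_pow (x := u) (p := (P : ℕ)) (n := k - 1) hunot
        (by rw [show k - 1 + 1 = k by omega]; exact hupow)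
      rwa [show k - 1 + 1 = k by omega] at h1
    set g : Multiplicative ZHat →* (ZMod l)ˣ :=
      (Units.map (PadicInt.toZMod (p := l)).toMonoidHom).comp
        ((Pi.evalMonoidHom _ L).comp χ) with hg_def
    set h : Multiplicative ZHat →* (ZMod l)ˣ :=
      { toFun := fun y => u ^ (PadicInt.toZModPow k (Multiplicative.toAdd y P)).val
        map_one' := by simp
        map_mul' := by
          intro y z
          simp only [toAdd_mul, Pi.add_apply, map_add]
          have hmo := pow_mod_orderOf u
            ((PadicInt.toZModPow k (Multiplicative.toAdd y P)).val +
             (PadicInt.toZModPow k (Multiplicative.toAdd z P)).val)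
          rw [horder] at hmo
          rw [ZMod.val_add, hmo, pow_add] } with hh_def
    have hgen : ∀ n : ℤ, g (Multiplicative.ofAdd ((n : ZHat)))
        = h (Multiplicative.ofAdd ((n : ZHat))) := by
      intro n
      have e1 : Multiplicative.ofAdd ((n : ZHat)) = (Multiplicative.ofAdd ((1 : ZHat))) ^ n := by
        rw [← ofAdd_zsmul]
        congr 1
        rw [zsmul_eq_mul, mul_one]
      rw [e1, map_zpow, map_zpow]
      congr 1
      have hg1 : g (Multiplicative.ofAdd ((1 : ZHat))) = u := by
        apply Units.ext
        show (PadicInt.toZMod ((χ (Multiplicative.ofAdd (1 : ZHat)) L : ℤ_[l]))) = (u : ZMod l)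
        rw [hχ L, hu]
        exact map_natCast _ q
      have hh1 : h (Multiplicative.ofAdd ((1 : ZHat))) = u := by
        show u ^ (PadicInt.toZModPow k
          ((Multiplicative.toAdd (Multiplicative.ofAdd (1 : ZHat))) P)).val = u
        rw [toAdd_ofAdd]
        show u ^ (PadicInt.toZModPow k (1 : ℤ_[(P : ℕ)])).val = u
        rw [map_one, ZMod.val_one, pow_one]
      rw [hg1, hh1]
    have hgc : Continuous fun y : Multiplicative ZHat => ((g y : ZMod l)) := by
      have e : (fun y : Multiplicative ZHat => ((g y : ZMod l))) =
          (fun z : ℤ_[l] => PadicInt.toZMod z) ∘ (fun w : (ℤ_[l])ˣ => (w : ℤ_[l]))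
            ∘ (fun v => v L) ∘ χ := rfl
      rw [e]
      exact (aux_continuous_toZMod l).comp
        (Units.continuous_val.comp ((continuous_apply L).comp hcont))
    have hhc : Continuous fun y : Multiplicative ZHat => ((h y : ZMod l)) := by
      have e : (fun y : Multiplicative ZHat => ((h y : ZMod l))) =
          (fun s : ZMod ((P : ℕ) ^ k) => ((u ^ s.val : (ZMod l)ˣ) : ZMod l))
            ∘ (PadicInt.toZModPow k)
            ∘ (fun y : Multiplicative ZHat => (Multiplicative.toAdd y) P) := rfl
      rw [e]
      exact (continuous_of_discreteTopology).comp
        ((aux_continuous_toZModPow _ k).comp ((continuous_apply P).comp continuous_toAdd))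
    have hdense : Dense (Set.range fun n : ℤ => Multiplicative.ofAdd ((n : ZHat))) :=
      aux_denseRange_intCast_ZHat
    have heq : (fun y : Multiplicative ZHat => ((g y : ZMod l)))
        = fun y => ((h y : ZMod l)) := by
      apply Continuous.ext_on hdense hgc hhc
      rintro _ ⟨n, rfl⟩
      exact congrArg Units.val (hgen n)
    have hgx : g x = 1 := by
      have e : g x = (Units.map (PadicInt.toZMod (p := l)).toMonoidHom) ((χ x) L) := rfl
      rw [e, hx]
      simp
    have hhx : h x = 1 := by
      apply Units.ext
      have := congrFun heq x
      rw [hgx] at this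
      exact this.symm
    have hhx' : u ^ (PadicInt.toZModPow k (Multiplicative.toAdd x P)).val = 1 := hhx
    have hdvdval : (P : ℕ) ^ k ∣ (PadicInt.toZModPow k (Multiplicative.toAdd x P)).val := by
      have hod := orderOf_dvd_of_pow_eq_one hhx'
      rwa [horder] at hod
    have hvlt := ZMod.val_lt (PadicInt.toZModPow k (Multiplicative.toAdd x P))
    have hv0 : (PadicInt.toZModPow k (Multiplicative.toAdd x P)).val = 0 := by
      rcases Nat.eq_zero_or_pos (PadicInt.toZModPow k (Multiplicative.toAdd x P)).val with h0 | hpos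
      · exact h0
      · exact absurd (Nat.le_of_dvd hpos hdvdval) (not_le.mpr hvlt)
    exact (ZMod.val_eq_zero _).mp hv0
  have hzero : Multiplicative.toAdd x = 0 := by
    funext P
    refine PadicInt.ext_of_toZModPow.mp fun n => ?_
    have h2 := hcomp P (n + 2) (by omega)
    have h3 := PadicInt.cast_toZModPow n (n + 2) (by omega) (Multiplicative.toAdd x P)
    rw [← h3, h2]
    simp
  calc x = Multiplicative.ofAdd (Multiplicative.toAdd x) := rfl
    _ = Multiplicative.ofAdd (0 : ZHat) := by rw [hzero]
    _ = 1 := rfl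
end

section
/- Let k be an infinite field, R a commutative k-algebra which is an integral domain, and H a subgroup of R^× containing k^×. Assume: (a) for every f ∈ R, for all but finitely many c ∈ k, f − c ∈ R^×; and (b) for every f ∈ H with 1 + f ∈ R^×, one has 1 + f ∈ H. Then for every f in the additive subgroup ⟨H⟩ of R generated by H, for all but finitely many c ∈ k one has f − c ∈ H; in particular ⟨H⟩ = k + H. -/
/-- Let `k` be an infinite field, `R` a commutative `k`-algebra which is an integral
domain, and `H ≤ R^×` a subgroup containing `k^×`.  Assume (a) for every `f ∈ R`, for all
but finitely many `c ∈ k`, `f - c ∈ R^×`; and (b) for every `f ∈ H` with `1 + f ∈ R^×`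
one has `1 + f ∈ H`.  Then for every `f` in the additive subgroup `⟨H⟩` generated by `H`,
for all but finitely many `c ∈ k` one has `f - c ∈ H`; in particular `⟨H⟩ = k + H`. -/
theorem addClosure_subgroup_eq_add
    (k R : Type*) [Field k] [Infinite k] [CommRing R] [IsDomain R] [Algebra k R]
    (H : Subgroup Rˣ)
    (hkH : ∀ (c : k) (hc : c ≠ 0),
      (Units.map (algebraMap k R).toMonoidHom) (Units.mk0 c hc) ∈ H)
    (ha : ∀ f : R, {c : k | ¬ IsUnit (f - algebraMap k R c)}.Finite)
    (hb : ∀ u ∈ H, ∀ v : Rˣ, (v : R) = 1 + (u : R) → v ∈ H) :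
    (∀ f ∈ AddSubgroup.closure ((fun u : Rˣ => (u : R)) '' (H : Set Rˣ)),
      {c : k | ¬ ∃ u ∈ H, (u : R) = f - algebraMap k R c}.Finite) ∧
    (∀ f : R, f ∈ AddSubgroup.closure ((fun u : Rˣ => (u : R)) '' (H : Set Rˣ)) ↔
      ∃ (c : k), ∃ u ∈ H, f = algebraMap k R c + (u : R)) := by
  set φ := algebraMap k R with hφ
  have hunit : ∀ (c : k), c ≠ 0 → ∃ m ∈ H, (m : R) = φ c := fun c hc =>
    ⟨_, hkH c hc, rfl⟩
  -- main finiteness claim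
  have key : ∀ f ∈ AddSubgroup.closure ((fun u : Rˣ => (u : R)) '' (H : Set Rˣ)),
      {c : k | ¬ ∃ u ∈ H, (u : R) = f - φ c}.Finite := by
    intro f hf
    induction hf using AddSubgroup.closure_induction with
    | mem x hx =>
      obtain ⟨u, hu, rfl⟩ := hx
      apply Set.Finite.subset ((Set.finite_singleton (0 : k)).union (ha u))
      intro c hc
      simp only [Set.mem_setOf_eq] at hc
      by_cases h0 : c = 0
      · exact Or.inl h0
      right
      simp only [Set.mem_setOf_eq]
      intro hIs
      apply hc
      obtain ⟨m, hm, hmv⟩ := hunit (-c) (neg_ne_zero.mpr h0)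
      have hw : (hIs.unit : R) = (u : R) - φ c := hIs.unit_spec
      have hinv : ((m⁻¹ : Rˣ) : R) * (- φ c) = 1 := by
        rw [← map_neg, ← hmv]; exact_mod_cast m.inv_mul
      have h1 : ((m⁻¹ * hIs.unit : Rˣ) : R) = 1 + ((m⁻¹ * u : Rˣ) : R) := by
        rw [Units.val_mul, Units.val_mul, hw, sub_eq_add_neg, mul_add, hinv, add_comm]
      have hmem := hb _ (mul_mem (inv_mem hm) hu) _ h1
      refine ⟨m * (m⁻¹ * hIs.unit), mul_mem hm hmem, ?_⟩
      rw [mul_inv_cancel_left]; exact hw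
    | zero =>
      apply Set.Finite.subset (Set.finite_singleton (0 : k))
      intro c hc
      simp only [Set.mem_setOf_eq] at hc
      by_contra h0
      obtain ⟨m, hm, hmv⟩ := hunit (-c) (neg_ne_zero.mpr h0)
      exact hc ⟨m, hm, by rw [hmv, map_neg, zero_sub]⟩
    | add x y hx hy Qx Qy =>
      obtain ⟨c₀, hc₀⟩ := Qy.infinite_compl.nonempty
      simp only [Set.mem_compl_iff, Set.mem_setOf_eq, not_not] at hc₀
      obtain ⟨v, hv, hve⟩ := hc₀
      apply Set.Finite.subset ((Qx.image (fun d => d + c₀)).union (ha (x + y)))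
      intro c hc
      simp only [Set.mem_setOf_eq] at hc
      by_contra hcon
      rw [Set.mem_union] at hcon
      push_neg at hcon
      obtain ⟨hc1, hc2⟩ := hcon
      simp only [Set.mem_setOf_eq, not_not] at hc2
      have hcu : ∃ u ∈ H, (u : R) = x - φ (c - c₀) := by
        by_contra hbad
        exact hc1 ⟨c - c₀, by simpa using hbad, by ring⟩
      obtain ⟨u, hu, hue⟩ := hcu
      apply hc
      have hw : (hc2.unit : R) = (u : R) + (v : R) := by
        rw [hc2.unit_spec, hue, hve, map_sub]; ring
      have hvinv : ((v⁻¹ : Rˣ) : R) * (v : R) = 1 := by exact_mod_cast v.inv_mul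
      have h1 : ((v⁻¹ * hc2.unit : Rˣ) : R) = 1 + ((v⁻¹ * u : Rˣ) : R) := by
        rw [Units.val_mul, Units.val_mul, hw, mul_add, hvinv, add_comm]
      have hmem := hb _ (mul_mem (inv_mem hv) hu) _ h1
      refine ⟨v * (v⁻¹ * hc2.unit), mul_mem hv hmem, ?_⟩
      rw [mul_inv_cancel_left]
      exact hc2.unit_spec
    | neg x hx Qx =>
      apply Set.Finite.subset (Qx.preimage (Set.injOn_of_injective neg_injective))
      intro c hc
      simp only [Set.mem_setOf_eq] at hc
      simp only [Set.mem_preimage, Set.mem_setOf_eq]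
      intro ⟨u, hu, hue⟩
      apply hc
      obtain ⟨m, hm, hmv⟩ := hunit (-1) (by norm_num)
      refine ⟨m * u, mul_mem hm hu, ?_⟩
      rw [Units.val_mul, hmv, hue, map_neg, map_neg, map_one]
      ring
  refine ⟨key, fun f => ⟨fun hf => ?_, fun ⟨c, u, hu, hfe⟩ => ?_⟩⟩
  · obtain ⟨c, hc⟩ := (key f hf).infinite_compl.nonempty
    simp only [Set.mem_compl_iff, Set.mem_setOf_eq, not_not] at hc
    obtain ⟨u, hu, hue⟩ := hc
    exact ⟨c, u, hu, by rw [hue]; ring⟩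
  · subst hfe
    refine AddSubgroup.add_mem _ ?_ (AddSubgroup.subset_closure ⟨u, hu, rfl⟩)
    by_cases h0 : c = 0
    · rw [h0, map_zero]; exact AddSubgroup.zero_mem _
    · exact AddSubgroup.subset_closure ⟨_, hkH c h0, rfl⟩
end

section
/- Let k be an infinite field, R a commutative k-algebra which is an integral domain, and H a subgroup of R^× containing k^×, satisfying: (a) for every f ∈ R, for all but finitely many c ∈ k, f − c ∈ R^×; and (b) for every f ∈ H with 1 + f ∈ R^×, one has 1 + f ∈ H. Then the additive subgroup ⟨H⟩ generated by H is a k-subalgebra of R, and ⟨H⟩ ∩ R^× = H; in particular the group of units of the ring ⟨H⟩ equals H. -/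
/-- Let `k` be an infinite field, `R` a commutative `k`-algebra which is an integral
domain, and `H ≤ R^×` a subgroup containing `k^×`, satisfying: (a) for every `f ∈ R`, for
all but finitely many `c ∈ k`, `f - c ∈ R^×`; and (b) for every `f ∈ H` with
`1 + f ∈ R^×` one has `1 + f ∈ H`.  Then the additive subgroup `⟨H⟩` generated by `H` is
a `k`-subalgebra of `R`, and `⟨H⟩ ∩ R^× = H`: the units of the ring `⟨H⟩` are exactly the
elements of `H`. -/
theorem addClosure_subgroup_isSubalgebra_and_units
    (k R : Type*) [Field k] [Infinite k] [CommRing R] [IsDomain R] [Algebra k R]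
    (H : Subgroup Rˣ)
    (hkH : ∀ (c : k) (hc : c ≠ 0),
      (Units.map (algebraMap k R).toMonoidHom) (Units.mk0 c hc) ∈ H)
    (ha : ∀ f : R, {c : k | ¬ IsUnit (f - algebraMap k R c)}.Finite)
    (hb : ∀ u ∈ H, ∀ v : Rˣ, (v : R) = 1 + (u : R) → v ∈ H) :
    (∃ S : Subalgebra k R,
      (S : Set R) = (AddSubgroup.closure ((fun u : Rˣ => (u : R)) '' (H : Set Rˣ)) : Set R)) ∧
    (∀ f : R,
      (f ∈ AddSubgroup.closure ((fun u : Rˣ => (u : R)) '' (H : Set Rˣ)) ∧ IsUnit f) ↔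
        ∃ u ∈ H, (u : R) = f) := by
  set Hs : Set R := (fun u : Rˣ => (u : R)) '' (H : Set Rˣ) with hHs
  set T := AddSubgroup.closure Hs with hT
  -- units of k give elements of H whose value is `algebraMap k R c`
  have hkval : ∀ (c : k) (hc : c ≠ 0), ∃ u ∈ H, (u : R) = algebraMap k R c := by
    intro c hc
    exact ⟨_, hkH c hc, rfl⟩
  obtain ⟨m, hm, hmv⟩ : ∃ m ∈ H, (m : R) = -1 := by
    refine ⟨_, hkH (-1) (by norm_num), ?_⟩
    simp
  -- sublemma A : if u ∈ H, c ≠ 0 and u - c is a unit, then u - c ∈ H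
  have hA : ∀ u : Rˣ, u ∈ H → ∀ c : k, c ≠ 0 → ∀ h : IsUnit ((u : R) - algebraMap k R c),
      ∃ v ∈ H, (v : R) = (u : R) - algebraMap k R c := by
    intro u hu c hc hun
    set cu : Rˣ := (Units.map (algebraMap k R).toMonoidHom) (Units.mk0 c hc) with hcu
    have hcuH : cu ∈ H := hkH c hc
    set ncu : Rˣ := cu * m with hncu
    have hncuH : ncu ∈ H := mul_mem hcuH hm
    have hncuv : (ncu : R) = -(algebraMap k R c) := by
      rw [hncu, Units.val_mul, hmv, hcu]
      simp
    have hx : -(algebraMap k R c) * ((ncu⁻¹ : Rˣ) : R) = 1 := by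
      rw [← hncuv]
      exact_mod_cast ncu.mul_inv
    have hmem : hun.unit * ncu⁻¹ ∈ H := by
      refine hb (u * ncu⁻¹) (mul_mem hu (inv_mem hncuH)) _ ?_
      rw [Units.val_mul, Units.val_mul, hun.unit_spec]
      linear_combination hx
    have : hun.unit * ncu⁻¹ * ncu ∈ H := mul_mem hmem hncuH
    rw [inv_mul_cancel_right] at this
    exact ⟨_, this, hun.unit_spec⟩
  -- sublemma B : sum of two elements of H is `algebraMap c + (element of H)`
  have hB : ∀ u : Rˣ, u ∈ H → ∀ v : Rˣ, v ∈ H →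
      ∃ c : k, ∃ w ∈ H, (u : R) + (v : R) = algebraMap k R c + (w : R) := by
    intro u hu v hv
    have hfin : ({c : k | ¬ IsUnit ((v : R) - algebraMap k R c)} ∪
        {c : k | ¬ IsUnit ((u : R) + (v : R) - algebraMap k R c)} ∪ {0}).Finite :=
      ((ha _).union (ha _)).union (Set.finite_singleton 0)
    obtain ⟨c, hcmem⟩ := hfin.infinite_compl.nonempty
    simp only [Set.mem_compl_iff, Set.mem_union, Set.mem_setOf_eq, Set.mem_singleton_iff,
      not_or, not_not] at hcmem
    obtain ⟨⟨hvc, huvc⟩, hc0⟩ := hcmem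
    obtain ⟨w1, hw1, hw1v⟩ := hA v hv c hc0 hvc
    have hx : (u : R) * ((u⁻¹ : Rˣ) : R) = 1 := by exact_mod_cast u.mul_inv
    have hmem : huvc.unit * u⁻¹ ∈ H := by
      refine hb (w1 * u⁻¹) (mul_mem hw1 (inv_mem hu)) _ ?_
      rw [Units.val_mul, Units.val_mul, huvc.unit_spec, hw1v]
      linear_combination hx
    have hw2 : huvc.unit * u⁻¹ * u ∈ H := mul_mem hmem hu
    rw [inv_mul_cancel_right] at hw2
    refine ⟨c, _, hw2, ?_⟩
    rw [huvc.unit_spec]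
    ring
  -- key representation lemma
  have key : ∀ f ∈ T, (∃ c : k, f = algebraMap k R c) ∨
      (∃ c : k, ∃ u ∈ H, f = algebraMap k R c + (u : R)) := by
    intro f hf
    induction hf using AddSubgroup.closure_induction with
    | mem x hx =>
      obtain ⟨u, hu, rfl⟩ := hx
      exact Or.inr ⟨0, u, hu, by simp⟩
    | zero => exact Or.inl ⟨0, by simp⟩
    | add x y hx hy ihx ihy =>
      rcases ihx with ⟨c, rfl⟩ | ⟨c, u, hu, rfl⟩ <;>
        rcases ihy with ⟨d, rfl⟩ | ⟨d, v, hv, rfl⟩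
      · exact Or.inl ⟨c + d, by rw [map_add]⟩
      · exact Or.inr ⟨c + d, v, hv, by rw [map_add]; ring⟩
      · exact Or.inr ⟨c + d, u, hu, by rw [map_add]; ring⟩
      · obtain ⟨e, w, hw, hwv⟩ := hB u hu v hv
        exact Or.inr ⟨c + d + e, w, hw, by rw [map_add, map_add]; linear_combination hwv⟩
    | neg x hx ihx =>
      rcases ihx with ⟨c, rfl⟩ | ⟨c, u, hu, rfl⟩
      · exact Or.inl ⟨-c, by rw [map_neg]⟩
      · exact Or.inr ⟨-c, u * m, mul_mem hu hm, by rw [map_neg, Units.val_mul, hmv]; ring⟩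
  -- forward units direction
  have hfwd : ∀ f : R, f ∈ T → IsUnit f → ∃ u ∈ H, (u : R) = f := by
    intro f hfT hf
    rcases key f hfT with ⟨c, rfl⟩ | ⟨c, u, hu, rfl⟩
    · have hc : c ≠ 0 := by
        rintro rfl
        simp only [map_zero] at hf
        exact not_isUnit_zero hf
      obtain ⟨w, hw, hwv⟩ := hkval c hc
      exact ⟨w, hw, hwv⟩
    · rcases eq_or_ne c 0 with rfl | hc
      · exact ⟨u, hu, by simp⟩
      obtain ⟨cu, hcuH, hcuv⟩ := hkval c hc
      have hx : (algebraMap k R c) * ((cu⁻¹ : Rˣ) : R) = 1 := by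
        rw [← hcuv]; exact_mod_cast cu.mul_inv
      have hmem : hf.unit * cu⁻¹ ∈ H := by
        refine hb (u * cu⁻¹) (mul_mem hu (inv_mem hcuH)) _ ?_
        rw [Units.val_mul, Units.val_mul, hf.unit_spec]
        linear_combination hx
      have : hf.unit * cu⁻¹ * cu ∈ H := mul_mem hmem hcuH
      rw [inv_mul_cancel_right] at this
      exact ⟨_, this, hf.unit_spec⟩
  constructor
  · -- subalgebra
    have hmul : ∀ a ∈ T, ∀ b ∈ T, a * b ∈ T := by
      intro a ha' b hb'
      induction ha' using AddSubgroup.closure_induction with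
      | mem x hx =>
        induction hb' using AddSubgroup.closure_induction with
        | mem y hy =>
          obtain ⟨u, hu, rfl⟩ := hx
          obtain ⟨v, hv, rfl⟩ := hy
          exact AddSubgroup.subset_closure ⟨u * v, mul_mem hu hv, rfl⟩
        | zero => simpa using zero_mem T
        | add y z _ _ ihy ihz => rw [mul_add]; exact add_mem ihy ihz
        | neg y _ ihy => rw [mul_neg]; exact neg_mem ihy
      | zero => simpa using zero_mem T
      | add x y _ _ ihx ihy => rw [add_mul]; exact add_mem ihx ihy
      | neg x _ ihx => rw [neg_mul]; exact neg_mem ihx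
    have halg : ∀ c : k, algebraMap k R c ∈ T := by
      intro c
      rcases eq_or_ne c 0 with rfl | hc
      · simpa using zero_mem T
      · obtain ⟨u, hu, huv⟩ := hkval c hc
        rw [← huv]
        exact AddSubgroup.subset_closure ⟨u, hu, rfl⟩
    refine ⟨{ carrier := (T : Set R)
              mul_mem' := fun hx hy => hmul _ hx _ hy
              one_mem' := AddSubgroup.subset_closure ⟨1, one_mem H, rfl⟩
              add_mem' := fun hx hy => add_mem hx hy
              zero_mem' := zero_mem T
              algebraMap_mem' := halg }, rfl⟩
  · intro f
    constructor
    · rintro ⟨hfT, hf⟩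
      exact hfwd f hfT hf
    · rintro ⟨u, hu, rfl⟩
      exact ⟨AddSubgroup.subset_closure ⟨u, hu, rfl⟩, u.isUnit⟩
end

section
/- Let p be a prime and A an abelian group such that A/pA is infinite. Let B ≤ A be a subgroup such that A/B is a torsion group whose p-primary component embeds into (ℚ_p/ℤ_p)^n for some n ≥ 0. Then the image of B in A/pA is infinite; in particular B is not contained in pA. -/
lemma aux_Ek_finite (p : ℕ) [hp : Fact p.Prime] (k : ℕ) :
    {y : ℚ_[p] ⧸ (PadicInt.subring p).toAddSubgroup | p ^ k • y = 0}.Finite := by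
  haveI : NeZero (p ^ k) := ⟨pow_ne_zero _ hp.out.ne_zero⟩
  set Z := (PadicInt.subring p).toAddSubgroup with hZ
  have hpk : ((p : ℚ_[p]) ^ k) ≠ 0 := pow_ne_zero _ (Nat.cast_ne_zero.mpr hp.out.ne_zero)
  apply Set.Finite.subset (Set.finite_range
    (fun m : Fin (p ^ k) => ((((m : ℕ) : ℚ_[p]) / (p : ℚ_[p]) ^ k : ℚ_[p]) : ℚ_[p] ⧸ Z)))
  rintro y hy
  obtain ⟨q, rfl⟩ := QuotientAddGroup.mk_surjective y
  have h1 : ((p : ℚ_[p]) ^ k * q) ∈ Z := by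
    have h2 : ((p ^ k • q : ℚ_[p]) : ℚ_[p] ⧸ Z) = 0 := by
      rw [show ((p ^ k • q : ℚ_[p]) : ℚ_[p] ⧸ Z) = p ^ k • (q : ℚ_[p] ⧸ Z) from
        (QuotientAddGroup.mk' Z).map_nsmul (p ^ k) q]
      exact hy
    rw [QuotientAddGroup.eq_zero_iff] at h2
    simpa [nsmul_eq_mul] using h2
  have h1 : ((p : ℚ_[p]) ^ k * q) ∈ PadicInt.subring p := Subring.mem_toAddSubgroup.mp h1
  set z : ℤ_[p] := ⟨_, (PadicInt.mem_subring_iff p).mp h1⟩ with hz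
  set m : ℕ := (PadicInt.toZModPow k z).val with hm
  have hlt : m < p ^ k := ZMod.val_lt _
  have hker : z - (m : ℤ_[p]) ∈ RingHom.ker (PadicInt.toZModPow (p := p) k) := by
    simp [RingHom.mem_ker, map_sub, map_natCast, hm, ZMod.natCast_val, ZMod.cast_id]
  rw [PadicInt.ker_toZModPow, Ideal.mem_span_singleton] at hker
  obtain ⟨w, hw⟩ := hker
  refine ⟨⟨m, hlt⟩, ?_⟩
  have hwq : ((m : ℚ_[p]) / (p : ℚ_[p]) ^ k) - q = -(w : ℚ_[p]) := by
    have := congrArg (fun x : ℤ_[p] => (x : ℚ_[p])) hw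
    push_cast at this
    field_simp
    linear_combination -this
  show _ = _
  rw [QuotientAddGroup.eq_iff_sub_mem, hwq]
  exact neg_mem (Subring.mem_toAddSubgroup.mpr w.2)


lemma aux_core (p : ℕ) [hp : Fact p.Prime] (M : Type*) [AddCommGroup M]
    (htor : AddMonoid.IsTorsion M)
    (hfin : ∀ k : ℕ, Finite ((p ^ k • AddMonoidHom.id M).ker)) :
    Finite (M ⧸ (p • AddMonoidHom.id M).range) := by
  classical
  set R := (p • AddMonoidHom.id M).range with hR
  set σ := QuotientAddGroup.mk' R with hσdef
  set Tm : ℕ → AddSubgroup M := fun k => (p ^ k • AddMonoidHom.id M).ker with hTm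
  have hmemT : ∀ (k : ℕ) (x : M), x ∈ Tm k ↔ p ^ k • x = 0 := fun k x => Iff.rfl
  have hmemR : ∀ x : M, x ∈ R ↔ ∃ y, p • y = x := fun x => Iff.rfl
  haveI hTfin : ∀ k, Finite (Tm k) := hfin
  have hTmono : ∀ {k l : ℕ}, k ≤ l → Tm k ≤ Tm l := by
    intro k l hkl x hx
    rw [hmemT] at hx ⊢
    rw [← Nat.sub_add_cancel hkl, pow_add, mul_smul, hx, smul_zero]
  -- covering
  have hcover : ∀ y : M ⧸ R, ∃ k, y ∈ (Tm k).map σ := by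
    intro y
    obtain ⟨m, rfl⟩ := QuotientAddGroup.mk'_surjective R y
    have hk0 : addOrderOf m ≠ 0 := (htor m).addOrderOf_pos.ne'
    set e : ℕ := (addOrderOf m).factorization p with he
    set r : ℕ := addOrderOf m / p ^ e with hr
    have hker : p ^ e * r = addOrderOf m := Nat.ordProj_mul_ordCompl_eq_self _ p
    have hcop : Nat.Coprime (p ^ (e + 1)) r :=
      Nat.Coprime.pow_left _ (Nat.coprime_ordCompl hp.out hk0)
    obtain ⟨u, v, huv⟩ := (Nat.isCoprime_iff_coprime.mpr hcop)
    push_cast at huv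
    have hx : (v * (r : ℤ)) • m ∈ Tm e := by
      rw [hmemT]
      have h2 : (p ^ e : ℕ) • ((v * (r : ℤ)) • m) = (v * ((addOrderOf m : ℕ) : ℤ)) • m := by
        rw [← natCast_zsmul, smul_smul]
        congr 1
        push_cast [← hker]
        ring
      rw [h2, mul_smul, natCast_zsmul, addOrderOf_nsmul_eq_zero, smul_zero]
    have hsub : m - (v * (r : ℤ)) • m ∈ R := by
      have h1 : m - (v * (r : ℤ)) • m = (u * (p : ℤ) ^ (e + 1)) • m := by
        rw [sub_eq_iff_eq_add, ← add_zsmul]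
        nth_rw 1 [← one_zsmul m]
        congr 1
        linarith [huv]
      rw [hmemR]
      refine ⟨(u * (p : ℤ) ^ e) • m, ?_⟩
      rw [h1, ← natCast_zsmul, smul_smul]
      congr 1
      ring
    exact ⟨e, AddSubgroup.mem_map.mpr ⟨_, hx, ((QuotientAddGroup.eq_iff_sub_mem).mpr hsub).symm⟩⟩
  -- counting bound
  have hbound : ∀ k : ℕ, Nat.card ((Tm k).map σ) ≤ Nat.card (Tm 1) := by
    intro k
    set g : (Tm k) →+ M ⧸ R := σ.comp (Tm k).subtype with hg
    set μ : (Tm (k + 1)) →+ M := (p • AddMonoidHom.id M).comp (Tm (k + 1)).subtype with hμ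
    set S : AddSubgroup M := (Tm (k + 1)).map (p • AddMonoidHom.id M) with hS
    have hSR : S = Tm k ⊓ R := by
      ext x
      constructor
      · rintro ⟨y, hy, rfl⟩
        refine ⟨?_, ⟨y, rfl⟩⟩
        show p ^ k • (p • y) = 0
        have := (hmemT (k + 1) y).mp hy
        rw [← this, pow_succ, mul_smul]
      · rintro ⟨hxk, y, rfl⟩
        refine ⟨y, ?_, rfl⟩
        show p ^ (k + 1) • y = 0
        have : p ^ k • ((p • AddMonoidHom.id M) y) = 0 := (hmemT k _).mp hxk
        rw [show ((p • AddMonoidHom.id M) y) = p • y from rfl] at this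
        rw [pow_succ, mul_smul]
        exact this
    have hSle : S ≤ Tm k := hSR.le.trans inf_le_left
    haveI hfinS : Finite S := by
      have : (S : Set M).Finite := by
        rw [hS, AddSubgroup.coe_map]
        exact (Set.toFinite (Tm (k + 1) : Set M)).image _
      exact this.to_subtype
    have hrg : g.range = (Tm k).map σ := by
      ext x
      simp only [AddMonoidHom.mem_range, AddSubgroup.mem_map, hg, AddMonoidHom.coe_comp,
        Function.comp_apply, AddSubgroup.coe_subtype, Subtype.exists]
      exact ⟨fun ⟨a, ha, h⟩ => ⟨a, ha, h⟩, fun ⟨a, ha, h⟩ => ⟨a, ha, h⟩⟩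
    have hrμ : μ.range = S := by
      ext x
      simp only [AddMonoidHom.mem_range, AddSubgroup.mem_map, hμ, hS, AddMonoidHom.coe_comp,
        Function.comp_apply, AddSubgroup.coe_subtype, Subtype.exists]
      exact ⟨fun ⟨a, ha, h⟩ => ⟨a, ha, h⟩, fun ⟨a, ha, h⟩ => ⟨a, ha, h⟩⟩
    have hkg : g.ker = S.addSubgroupOf (Tm k) := by
      ext x
      simp only [AddMonoidHom.mem_ker, AddSubgroup.mem_addSubgroupOf, hg, AddMonoidHom.coe_comp,
        Function.comp_apply, AddSubgroup.coe_subtype, hσdef, QuotientAddGroup.mk'_apply,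
        QuotientAddGroup.eq_zero_iff, hSR, AddSubgroup.mem_inf]
      exact ⟨fun h => ⟨x.2, h⟩, fun h => h.2⟩
    have hkμ : μ.ker = (Tm 1).addSubgroupOf (Tm (k + 1)) := by
      ext x
      simp only [AddMonoidHom.mem_ker, AddSubgroup.mem_addSubgroupOf, hμ, AddMonoidHom.coe_comp,
        Function.comp_apply, AddSubgroup.coe_subtype]
      rw [hmemT, pow_one]
      rfl
    have c1 : Nat.card (Tm k) = Nat.card ((Tm k).map σ) * Nat.card S := by
      rw [AddSubgroup.card_eq_card_quotient_mul_card_addSubgroup g.ker]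
      congr 1
      · rw [← hrg]
        exact Nat.card_congr (QuotientAddGroup.quotientKerEquivRange g).toEquiv
      · rw [hkg]
        exact Nat.card_congr (AddSubgroup.addSubgroupOfEquivOfLe hSle).toEquiv
    have c2 : Nat.card (Tm (k + 1)) = Nat.card S * Nat.card (Tm 1) := by
      rw [AddSubgroup.card_eq_card_quotient_mul_card_addSubgroup μ.ker]
      congr 1
      · rw [← hrμ]
        exact Nat.card_congr (QuotientAddGroup.quotientKerEquivRange μ).toEquiv
      · rw [hkμ]
        exact Nat.card_congr
          (AddSubgroup.addSubgroupOfEquivOfLe (hTmono (Nat.le_add_left 1 k))).toEquiv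
    have hmono : Nat.card (Tm k) ≤ Nat.card (Tm (k + 1)) :=
      Nat.card_le_card_of_injective (AddSubgroup.inclusion (hTmono (Nat.le_succ k)))
        (AddSubgroup.inclusion_injective _)
    have hSpos : 0 < Nat.card S := Nat.card_pos
    have : Nat.card ((Tm k).map σ) * Nat.card S ≤ Nat.card (Tm 1) * Nat.card S := by
      rw [← c1, mul_comm (Nat.card (Tm 1))]
      rw [← c2]
      exact hmono
    exact Nat.le_of_mul_le_mul_right this hSpos
  -- conclude
  by_contra hinf
  rw [not_finite_iff_infinite] at hinf
  set c := Nat.card (Tm 1) with hc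
  obtain ⟨s, hs⟩ := Infinite.exists_subset_card_eq (M ⧸ R) (c + 1)
  choose κ hκ using hcover
  set K := s.sup κ with hK
  have hsub : (↑s : Set (M ⧸ R)) ⊆ ((Tm K).map σ : Set (M ⧸ R)) := by
    intro y hy
    exact AddSubgroup.map_mono (hTmono (Finset.le_sup hy)) (hκ y)
  have hWfin : ((Tm K).map σ : Set (M ⧸ R)).Finite := by
    rw [AddSubgroup.coe_map]
    exact (Set.toFinite (Tm K : Set M)).image _
  have hle : c + 1 ≤ c := by
    calc c + 1 = s.card := hs.symm
    _ = (↑s : Set (M ⧸ R)).ncard := (Set.ncard_coe_finset s).symm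
    _ ≤ ((Tm K).map σ : Set (M ⧸ R)).ncard := Set.ncard_le_ncard hsub hWfin
    _ = Nat.card ((Tm K).map σ) := (Nat.card_coe_set_eq _).symm
    _ ≤ c := hbound K
  omega

/-- Let `p` be a prime and `A` an abelian group with `A/pA` infinite.  Let `B ≤ A` be a
subgroup such that `A/B` is torsion and the `p`-primary component of `A/B` embeds into
`(ℚ_p/ℤ_p)^n` for some `n`.  Then the image of `B` in `A/pA` is infinite; in particular
`B` is not contained in `pA`. -/
theorem image_infinite_of_primary_finite_corank
    (p : ℕ) [Fact p.Prime] (A : Type*) [AddCommGroup A]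
    (hA : Infinite (A ⧸ (p • AddMonoidHom.id A).range))
    (B : AddSubgroup A)
    (htor : AddMonoid.IsTorsion (A ⧸ B))
    (n : ℕ)
    (f : AddCommGroup.primaryComponent (A ⧸ B) p →+
        (Fin n → ℚ_[p] ⧸ (PadicInt.subring p).toAddSubgroup))
    (hf : Function.Injective f) :
    Set.Infinite ((QuotientAddGroup.mk' (p • AddMonoidHom.id A).range) '' B) ∧
      ¬ B ≤ (p • AddMonoidHom.id A).range := by
  set Rₐ := (p • AddMonoidHom.id A).range with hRa
  set π := QuotientAddGroup.mk' Rₐ with hπ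
  -- finiteness of the p-power torsion subgroups of A ⧸ B
  have hfinT : ∀ k : ℕ, Finite ((p ^ k • AddMonoidHom.id (A ⧸ B)).ker) := by
    intro k
    have key : ∀ x : (p ^ k • AddMonoidHom.id (A ⧸ B)).ker,
        (x : A ⧸ B) ∈ AddCommGroup.primaryComponent (A ⧸ B) p := by
      intro x
      have hx : p ^ k • (x : A ⧸ B) = 0 := x.2
      obtain ⟨m, -, hm⟩ := (Nat.dvd_prime_pow (Fact.out (p := p.Prime))).mp
        (addOrderOf_dvd_of_nsmul_eq_zero hx)
      exact ⟨m, by rw [← hm]; exact addOrderOf_nsmul_eq_zero _⟩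
    haveI hEfin : Finite {y : ℚ_[p] ⧸ (PadicInt.subring p).toAddSubgroup // p ^ k • y = 0} :=
      (aux_Ek_finite p k).to_subtype
    set j : ((p ^ k • AddMonoidHom.id (A ⧸ B)).ker) →
        (Fin n → {y : ℚ_[p] ⧸ (PadicInt.subring p).toAddSubgroup // p ^ k • y = 0}) :=
      fun x i => ⟨f ⟨(x : A ⧸ B), key x⟩ i, by
        have h0 : p ^ k • (⟨(x : A ⧸ B), key x⟩ :
            AddCommGroup.primaryComponent (A ⧸ B) p) = 0 := by
          ext
          exact x.2
        have h1 : p ^ k • f ⟨(x : A ⧸ B), key x⟩ = 0 := by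
          rw [← map_nsmul, h0, map_zero]
        calc p ^ k • f ⟨(x : A ⧸ B), key x⟩ i
            = (p ^ k • f ⟨(x : A ⧸ B), key x⟩) i := rfl
          _ = 0 := by rw [h1]; rfl⟩ with hj
    have hjinj : Function.Injective j := by
      intro x y hxy
      have : f ⟨(x : A ⧸ B), key x⟩ = f ⟨(y : A ⧸ B), key y⟩ := by
        funext i
        exact Subtype.ext_iff.mp (congrFun hxy i)
      exact Subtype.ext (Subtype.mk_eq_mk.mp (hf this))
    exact Finite.of_injective j hjinj
  have hcore : Finite ((A ⧸ B) ⧸ (p • AddMonoidHom.id (A ⧸ B)).range) :=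
    aux_core p (A ⧸ B) htor hfinT
  set C := B ⊔ Rₐ with hC
  have hCB : C.map (QuotientAddGroup.mk' B) = (p • AddMonoidHom.id (A ⧸ B)).range := by
    rw [hC, AddSubgroup.map_sup]
    have h1 : B.map (QuotientAddGroup.mk' B) = ⊥ := by
      rw [eq_bot_iff]
      rintro x ⟨a, ha, rfl⟩
      simpa [AddSubgroup.mem_bot] using (QuotientAddGroup.eq_zero_iff a).mpr ha
    rw [h1, bot_sup_eq]
    ext x
    constructor
    · rintro ⟨a, ⟨b, rfl⟩, rfl⟩
      exact ⟨QuotientAddGroup.mk' B b,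
        (map_nsmul (QuotientAddGroup.mk' B) p b).symm⟩
    · rintro ⟨y, rfl⟩
      obtain ⟨b, rfl⟩ := QuotientAddGroup.mk'_surjective B y
      exact ⟨p • b, ⟨b, rfl⟩, map_nsmul (QuotientAddGroup.mk' B) p b⟩
  have hRπ : Rₐ.map π = ⊥ := by
    rw [eq_bot_iff]
    rintro x ⟨a, ha, rfl⟩
    rw [AddSubgroup.mem_bot, hπ]
    exact (QuotientAddGroup.eq_zero_iff a).mpr ha
  have hCS : C.map π = B.map π := by
    rw [hC, AddSubgroup.map_sup, hRπ, sup_bot_eq]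
  have hfinAC : Finite (A ⧸ C) := by
    have h2 : Finite ((A ⧸ B) ⧸ C.map (QuotientAddGroup.mk' B)) := by
      rw [hCB]; exact hcore
    exact Finite.of_equiv _
      (QuotientAddGroup.quotientQuotientEquivQuotient B C le_sup_left).toEquiv
  have hInf : Set.Infinite (π '' B) := by
    rw [← AddSubgroup.coe_map]
    intro hfinimg
    haveI : Finite (B.map π) := hfinimg.to_subtype
    haveI : Finite ((A ⧸ Rₐ) ⧸ B.map π) := by
      rw [← hCS]
      exact Finite.of_equiv _
        (QuotientAddGroup.quotientQuotientEquivQuotient Rₐ C le_sup_right).toEquiv.symm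
    haveI : Finite (A ⧸ Rₐ) :=
      Nat.finite_of_card_ne_zero (by
        rw [AddSubgroup.card_eq_card_quotient_mul_card_addSubgroup (B.map π)]
        exact mul_ne_zero Nat.card_pos.ne' Nat.card_pos.ne')
    exact not_finite (A ⧸ Rₐ)
  refine ⟨hInf, fun hle => ?_⟩
  have hsub : π '' B ⊆ {0} := by
    rintro _ ⟨b, hb, rfl⟩
    exact (QuotientAddGroup.eq_zero_iff b).mpr (hle hb)
  exact hInf ((Set.finite_singleton 0).subset hsub)
end

section
/- (Fundamental theorem of projective geometry) Let k₁, k₂ be fields and V_i a k_i-vector space with dim_{k_i} V_i ≥ 3 (i = 1,2). Let σ : ℙ(V₁) → ℙ(V₂) be a bijection mapping lines onto lines (a collineation). Then there exist a field isomorphism μ : k₁ → k₂ and a μ-semilinear additive bijection λ : V₁ → V₂ inducing σ; moreover, μ is uniquely determined and λ is unique up to replacing λ(−) by λ(a·−) for a (unique) scalar a ∈ k₁^×. -/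
open scoped LinearAlgebra.Projectivization

/-- A line in the projective space `ℙ K V`: the set of points lying in a two-dimensional
subspace of `V`. -/
def IsLine (K V : Type*) [Field K] [AddCommGroup V] [Module K V]
    (s : Set (ℙ K V)) : Prop :=
  ∃ W : Submodule K V, Module.finrank K W = 2 ∧
    s = {x : ℙ K V | x.submodule ≤ W}

open Submodule

namespace FTPG

variable {K V : Type*} [Field K] [AddCommGroup V] [Module K V]

/-- Two vectors are independent. -/
def I2 (K : Type*) {V : Type*} [Field K] [AddCommGroup V] [Module K V] (x y : V) : Prop :=
  ∀ c d : K, c • x + d • y = 0 → c = 0 ∧ d = 0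

/-- Three vectors are independent. -/
def I3 (K : Type*) {V : Type*} [Field K] [AddCommGroup V] [Module K V] (x y z : V) : Prop :=
  ∀ c d e : K, c • x + d • y + e • z = 0 → c = 0 ∧ d = 0 ∧ e = 0

theorem I2.ne₁ {x y : V} (h : I2 K x y) : x ≠ 0 := by
  intro hx
  simpa using (h 1 0 (by rw [hx]; module)).1

theorem I2.symm {x y : V} (h : I2 K x y) : I2 K y x := by
  intro c d hcd
  obtain ⟨h1, h2⟩ := h d c (by rw [← hcd]; module)
  exact ⟨h2, h1⟩

theorem I2.ne₂ {x y : V} (h : I2 K x y) : y ≠ 0 := h.symm.ne₁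

theorem I2.not_mem {x y : V} (h : I2 K x y) : y ∉ span K {x} := by
  intro hy
  obtain ⟨c, hc⟩ := mem_span_singleton.1 hy
  simpa using (h c (-1) (by rw [hc]; module)).2

theorem I2.of_not_mem {x y : V} (hx : x ≠ 0) (hy : y ∉ span K {x}) : I2 K x y := by
  intro c d hcd
  have hd : d = 0 := by
    by_contra hd
    have h2 : d • y = -(c • x) := by rwa [add_comm, add_eq_zero_iff_eq_neg] at hcd
    refine hy (mem_span_singleton.2 ⟨-d⁻¹ * c, ?_⟩)
    calc (-d⁻¹ * c) • x = d⁻¹ • -(c • x) := by module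
      _ = d⁻¹ • (d • y) := by rw [h2]
      _ = y := by rw [smul_smul, inv_mul_cancel₀ hd, one_smul]
  subst hd
  simp only [zero_smul, add_zero, smul_eq_zero] at hcd
  exact ⟨hcd.resolve_right hx, rfl⟩

theorem i2_or_mem {x y : V} (hx : x ≠ 0) : y ∈ span K {x} ∨ I2 K x y := by
  by_cases h : y ∈ span K {x}
  · exact Or.inl h
  · exact Or.inr (I2.of_not_mem hx h)

theorem I2.smul {x y : V} {c d : K} (hc : c ≠ 0) (hd : d ≠ 0) (h : I2 K x y) :
    I2 K (c • x) (d • y) := by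
  intro p q hpq
  obtain ⟨h1, h2⟩ := h (p * c) (q * d) (by rw [← hpq]; module)
  exact ⟨(mul_eq_zero.1 h1).resolve_right hc, (mul_eq_zero.1 h2).resolve_right hd⟩

theorem I3.of {x y z : V} (h : I2 K x y) (hz : z ∉ span K ({x, y} : Set V)) : I3 K x y z := by
  intro c d e hcde
  have he : e = 0 := by
    by_contra he
    have h2 : e • z = -(c • x + d • y) := by rwa [add_comm, add_eq_zero_iff_eq_neg] at hcde
    refine hz (mem_span_pair.2 ⟨-e⁻¹ * c, -e⁻¹ * d, ?_⟩)
    calc (-e⁻¹ * c) • x + (-e⁻¹ * d) • y = e⁻¹ • -(c • x + d • y) := by module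
      _ = e⁻¹ • (e • z) := by rw [h2]
      _ = z := by rw [smul_smul, inv_mul_cancel₀ he, one_smul]
  subst he
  simp only [zero_smul, add_zero] at hcde
  obtain ⟨h1, h2⟩ := h c d hcde
  exact ⟨h1, h2, rfl⟩

theorem I3.i2₁₂ {x y z : V} (h : I3 K x y z) : I2 K x y := by
  intro c d hcd
  obtain ⟨h1, h2, _⟩ := h c d 0 (by rw [← hcd]; module)
  exact ⟨h1, h2⟩

theorem I3.swap₂₃ {x y z : V} (h : I3 K x y z) : I3 K x z y := by
  intro c d e hcde
  obtain ⟨h1, h2, h3⟩ := h c e d (by rw [← hcde]; module)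
  exact ⟨h1, h3, h2⟩

theorem I3.swap₁₂ {x y z : V} (h : I3 K x y z) : I3 K y x z := by
  intro c d e hcde
  obtain ⟨h1, h2, h3⟩ := h d c e (by rw [← hcde]; module)
  exact ⟨h2, h1, h3⟩

theorem I3.rotate {x y z : V} (h : I3 K x y z) : I3 K y z x := h.swap₁₂.swap₂₃

theorem I3.i2₁₃ {x y z : V} (h : I3 K x y z) : I2 K x z := h.swap₂₃.i2₁₂

theorem I3.i2₂₃ {x y z : V} (h : I3 K x y z) : I2 K y z := h.rotate.i2₁₂

theorem I3.not_mem_pair {x y z : V} (h : I3 K x y z) : z ∉ span K ({x, y} : Set V) := by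
  intro hz
  obtain ⟨c, d, hcd⟩ := mem_span_pair.1 hz
  simpa using (h c d (-1) (by rw [hcd]; module)).2.2

/-- Adding a combination of the first two entries to the third preserves independence. -/
theorem I3.lincol₃ {x y z : V} (h : I3 K x y z) (p q : K) : I3 K x y (p • x + q • y + z) := by
  intro c d e hcde
  obtain ⟨h1, h2, h3⟩ := h (c + e * p) (d + e * q) e (by rw [← hcde]; module)
  refine ⟨?_, ?_, h3⟩
  · subst h3; simpa using h1
  · subst h3; simpa using h2

theorem I3.lincol₂ {x y z : V} (h : I3 K x y z) (p : K) : I3 K x (p • x + y) z := by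
  intro c d e hcde
  obtain ⟨h1, h2, h3⟩ := h (c + d * p) d e (by rw [← hcde]; module)
  refine ⟨?_, h2, h3⟩
  subst h2; simpa using h1

theorem I3.smul₂ {x y z : V} {p : K} (hp : p ≠ 0) (h : I3 K x y z) : I3 K x (p • y) z := by
  intro c d e hcde
  obtain ⟨h1, h2, h3⟩ := h c (d * p) e (by rw [← hcde]; module)
  exact ⟨h1, (mul_eq_zero.1 h2).resolve_right hp, h3⟩

theorem exists_not_mem_span_pair (h3 : 3 ≤ Module.rank K V) (x y : V) :
    ∃ z : V, z ∉ span K ({x, y} : Set V) := by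
  by_contra h
  push_neg at h
  have htop : span K ({x, y} : Set V) = ⊤ := eq_top_iff'.2 h
  have h1 : Module.rank K V ≤ 2 := by
    have h2 := rank_span_le (R := K) ({x, y} : Set V)
    rw [htop, rank_top] at h2
    refine h2.trans (Cardinal.mk_insert_le.trans ?_)
    rw [Cardinal.mk_singleton]
    norm_num
  have : (3 : Cardinal) ≤ 2 := h3.trans h1
  norm_num at this

theorem exists_ne_zero (h3 : 3 ≤ Module.rank K V) : ∃ x : V, x ≠ 0 := by
  obtain ⟨z, hz⟩ := exists_not_mem_span_pair h3 (0 : V) 0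
  exact ⟨z, fun h => hz (by rw [h]; exact zero_mem _)⟩

theorem finrank_span_pair {x y : V} (h : I2 K x y) :
    Module.finrank K (span K ({x, y} : Set V)) = 2 := by
  have hrange : Set.range ![x, y] = {x, y} := by
    ext v
    constructor
    · rintro ⟨i, rfl⟩
      fin_cases i <;> simp
    · rintro (rfl | rfl)
      · exact ⟨0, rfl⟩
      · exact ⟨1, rfl⟩
  have hli : LinearIndependent K ![x, y] := by
    rw [linearIndependent_fin2]
    refine ⟨h.ne₂, fun a ha => ?_⟩
    simp only [Matrix.cons_val_one, Matrix.head_cons, Matrix.cons_val_zero] at ha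
    simpa using (h 1 (-a) (by rw [← ha]; module)).1
  have h2 := finrank_span_eq_card (R := K) hli
  rwa [hrange, Fintype.card_fin] at h2

theorem exists_smul_eq_of_mem_span (h3 : 3 ≤ Module.rank K V) (h : V → V)
    (hadd : ∀ x y : V, h (x + y) = h x + h y)
    (hmem : ∀ x : V, x ≠ 0 → h x ≠ 0 ∧ h x ∈ span K {x}) :
    ∃ d : K, d ≠ 0 ∧ ∀ x : V, h x = d • x := by
  have h0 : h 0 = 0 := by
    have h00 := hadd 0 0
    rw [add_zero] at h00
    have := congrArg (fun v => v - h 0) h00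
    simpa using this.symm
  have hcoef : ∀ x : V, x ≠ 0 → ∃ d : K, d ≠ 0 ∧ h x = d • x := by
    intro x hx
    obtain ⟨hne, hmem'⟩ := hmem x hx
    obtain ⟨d, hd⟩ := mem_span_singleton.1 hmem'
    exact ⟨d, fun h0' => hne (by rw [← hd, h0', zero_smul]), hd.symm⟩
  obtain ⟨x₀, hx₀⟩ := exists_ne_zero h3
  obtain ⟨d, hd0, hd⟩ := hcoef x₀ hx₀
  have step : ∀ x y : V, I2 K x y → ∀ c c' : K, h x = c • x → h y = c' • y → c = c' := by
    intro x y hxy c c' hc hc'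
    have hsne : x + y ≠ 0 := fun hs => by
      simpa using (hxy 1 1 (by rw [← hs]; module)).1
    obtain ⟨c'', hc''0, hc''⟩ := hcoef (x + y) hsne
    have hsum2 : c'' • (x + y) = c • x + c' • y := by rw [← hc'', hadd, hc, hc']
    have hz : c'' • (x + y) - (c • x + c' • y) = 0 := by rw [hsum2]; exact sub_self _
    obtain ⟨e1, e2⟩ := hxy (c'' - c) (c'' - c') (by rw [← hz]; module)
    rw [sub_eq_zero] at e1 e2
    rw [← e1, ← e2]
  have key : ∀ x : V, x ≠ 0 → h x = d • x := by
    intro x hx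
    obtain ⟨c, hc0, hc⟩ := hcoef x hx
    rcases i2_or_mem (K := K) hx₀ (y := x) with hmemx | hI
    · obtain ⟨z, hz⟩ := exists_not_mem_span_pair h3 x₀ x₀
      have hz' : z ∉ span K ({x₀} : Set V) := by rwa [Set.pair_eq_singleton] at hz
      have hzx₀ : I2 K x₀ z := I2.of_not_mem hx₀ hz'
      obtain ⟨cz, hcz0, hcz⟩ := hcoef z hzx₀.ne₂
      have e1 : d = cz := step x₀ z hzx₀ d cz hd hcz
      have hxz : I2 K x z := by
        refine I2.of_not_mem hx fun hmem' => hz' ?_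
        obtain ⟨p, hp⟩ := mem_span_singleton.1 hmem'
        obtain ⟨q, hq⟩ := mem_span_singleton.1 hmemx
        exact mem_span_singleton.2 ⟨p * q, by rw [mul_smul, hq, hp]⟩
      have e2 : c = cz := step x z hxz c cz hc hcz
      rw [hc, e2, ← e1]
    · rw [hc, (step x₀ x hI d c hd hc).symm]
  refine ⟨d, hd0, fun x => ?_⟩
  by_cases hx : x = 0
  · rw [hx, h0, smul_zero]
  · exact key x hx

theorem I2.add_ne {x y : V} (h : I2 K x y) : x + y ≠ 0 := fun h0 => by
  simpa using (h 1 1 (by rw [← h0]; module)).1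

theorem mem_span_singleton_comm {x y : V} (hy : y ≠ 0) (h : y ∈ span K {x}) :
    x ∈ span K {y} := by
  obtain ⟨c, hc⟩ := mem_span_singleton.1 h
  have hc0 : c ≠ 0 := fun h0 => hy (by rw [← hc, h0, zero_smul])
  exact mem_span_singleton.2 ⟨c⁻¹, by rw [← hc, smul_smul, inv_mul_cancel₀ hc0, one_smul]⟩

theorem span_singleton_eq_of_mem {x y : V} (hy : y ≠ 0) (h : y ∈ span K {x}) :
    span K ({y} : Set V) = span K ({x} : Set V) :=
  le_antisymm ((span_singleton_le_iff_mem _ _).2 h)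
    ((span_singleton_le_iff_mem _ _).2 (mem_span_singleton_comm hy h))

theorem add_ne_zero_of_not_mem {x y : V} (hy : y ∉ span K {x}) : x + y ≠ 0 := fun h0 =>
  hy (mem_span_singleton.2 ⟨-1, by rw [neg_one_smul]; exact neg_eq_of_add_eq_zero_left (by rw [add_comm]; exact h0)⟩)

theorem mem_add_not_mem {x z y : V} (hx : x ∈ span K {y}) (hb : z ∉ span K {y}) :
    x + z ∉ span K {y} := fun hm => hb (by simpa using sub_mem hm hx)

section Core

variable {K₁ V₁ K₂ V₂ : Type*} [Field K₁] [AddCommGroup V₁] [Module K₁ V₁]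
  [Field K₂] [AddCommGroup V₂] [Module K₂ V₂]

/-- The data of a "projective collinearity-preserving" map on vectors. -/
structure Setup (K₁ K₂ : Type*) {V₁ V₂ : Type*} [Field K₁] [AddCommGroup V₁] [Module K₁ V₁]
    [Field K₂] [AddCommGroup V₂] [Module K₂ V₂] (s : V₁ → V₂) (a b : V₁) : Prop where
  h3 : 3 ≤ Module.rank K₁ V₁
  hs0 : ∀ x : V₁, x ≠ 0 → s x ≠ 0
  hs : ∀ x y z : V₁, x ≠ 0 → y ≠ 0 → z ≠ 0 →
    (z ∈ span K₁ ({x, y} : Set V₁) ↔ s z ∈ span K₂ ({s x, s y} : Set V₂))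
  ha : a ≠ 0
  hb : b ∉ span K₁ {a}

open Classical in
/-- The candidate image vector for `x`, normalized against the base point `a`. -/
noncomputable def pick (K₂ : Type*) {V₁ V₂ : Type*} [Field K₂] [AddCommGroup V₁]
    [AddCommGroup V₂] [Module K₂ V₂] (s : V₁ → V₂) (a x : V₁) : V₂ :=
  if h : ∃ ω : V₂, ω ∈ span K₂ {s x} ∧ s a + ω ∈ span K₂ {s (a + x)} then h.choose else 0

open Classical in
/-- The semilinear lift of the collineation. -/
noncomputable def gfun (K₁ K₂ : Type*) {V₁ V₂ : Type*} [Field K₁] [AddCommGroup V₁]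
    [Module K₁ V₁] [Field K₂] [AddCommGroup V₂] [Module K₂ V₂]
    (s : V₁ → V₂) (a b x : V₁) : V₂ :=
  if x ∈ span K₁ {a} then pick K₂ s a (x + b) - pick K₂ s a b else pick K₂ s a x

namespace Setup

variable {s : V₁ → V₂} {a b : V₁} (S : Setup K₁ K₂ s a b)
include S

theorem hsingle {x y : V₁} (hx : x ≠ 0) (hy : y ≠ 0) :
    y ∈ span K₁ ({x} : Set V₁) ↔ s y ∈ span K₂ ({s x} : Set V₂) := by
  have := S.hs x x y hx hx hy
  rwa [Set.pair_eq_singleton, Set.pair_eq_singleton] at this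

theorem fwd {x y z : V₁} (hx : x ≠ 0) (hy : y ≠ 0) (hz : z ≠ 0)
    (h : z ∈ span K₁ ({x, y} : Set V₁)) : s z ∈ span K₂ ({s x, s y} : Set V₂) :=
  (S.hs x y z hx hy hz).1 h

theorem sI2 {x y : V₁} (h : I2 K₁ x y) : I2 K₂ (s x) (s y) :=
  I2.of_not_mem (S.hs0 x h.ne₁)
    (fun m => h.not_mem ((S.hsingle h.ne₁ h.ne₂).2 m))

theorem sI3 {x y z : V₁} (h : I3 K₁ x y z) : I3 K₂ (s x) (s y) (s z) :=
  I3.of (S.sI2 h.i2₁₂)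
    (fun m => h.not_mem_pair ((S.hs x y z h.i2₁₂.ne₁ h.i2₁₂.ne₂ h.i2₁₃.ne₂).2 m))

theorem spanseq {x y : V₁} (hx : x ≠ 0) (hy : y ≠ 0) (h : y ∈ span K₁ {x}) :
    span K₂ ({s y} : Set V₂) = span K₂ ({s x} : Set V₂) :=
  span_singleton_eq_of_mem (S.hs0 y hy) ((S.hsingle hx hy).1 h)

theorem exu {x : V₁} (hx : x ∉ span K₁ {a}) :
    ∃ ω : V₂, ω ∈ span K₂ {s x} ∧ s a + ω ∈ span K₂ {s (a + x)} := by
  have hxne : x ≠ 0 := fun h => hx (h ▸ zero_mem _)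
  have haxne : a + x ≠ 0 := add_ne_zero_of_not_mem hx
  have hI : I2 K₁ a x := I2.of_not_mem S.ha hx
  have hm : s (a + x) ∈ span K₂ ({s a, s x} : Set V₂) :=
    S.fwd S.ha hxne haxne (mem_span_pair.2 ⟨1, 1, by module⟩)
  obtain ⟨c₁, c₂, hc⟩ := mem_span_pair.1 hm
  have hc₁ : c₁ ≠ 0 := by
    intro h0
    have hmem : s (a + x) ∈ span K₂ {s x} :=
      mem_span_singleton.2 ⟨c₂, by rw [← hc, h0]; module⟩
    have h2 : a + x ∈ span K₁ {x} := (S.hsingle hxne haxne).2 hmem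
    exact hI.symm.not_mem (by simpa using sub_mem h2 (mem_span_singleton.2 ⟨1, one_smul _ _⟩))
  have hc₂ : c₂ ≠ 0 := by
    intro h0
    have hmem : s (a + x) ∈ span K₂ {s a} :=
      mem_span_singleton.2 ⟨c₁, by rw [← hc, h0]; module⟩
    have h2 : a + x ∈ span K₁ {a} := (S.hsingle S.ha haxne).2 hmem
    exact hx (by simpa using sub_mem h2 (mem_span_singleton.2 ⟨1, one_smul _ _⟩))
  refine ⟨(c₁⁻¹ * c₂) • s x, smul_mem _ _ (mem_span_singleton.2 ⟨1, one_smul _ _⟩), ?_⟩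
  refine mem_span_singleton.2 ⟨c₁⁻¹, ?_⟩
  rw [← hc, smul_add, smul_smul, smul_smul, inv_mul_cancel₀ hc₁, one_smul]

theorem pick_spec {x : V₁} (hx : x ∉ span K₁ {a}) :
    pick K₂ s a x ∈ span K₂ {s x} ∧ s a + pick K₂ s a x ∈ span K₂ {s (a + x)} := by
  have h' := S.exu hx
  rw [pick, dif_pos h']
  exact h'.choose_spec

theorem pick_ne {x : V₁} (hx : x ∉ span K₁ {a}) : pick K₂ s a x ≠ 0 := by
  intro h0
  have hxne : x ≠ 0 := fun h => hx (h ▸ zero_mem _)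
  have haxne : a + x ≠ 0 := add_ne_zero_of_not_mem hx
  have h2 := (S.pick_spec hx).2
  rw [h0, add_zero] at h2
  have h3 : a ∈ span K₁ {a + x} := (S.hsingle haxne S.ha).2 h2
  have h4 : a + x ∈ span K₁ {a} := mem_span_singleton_comm S.ha h3
  exact hx (by simpa using sub_mem h4 (mem_span_singleton.2 ⟨1, one_smul _ _⟩))

theorem pick_uniq {x : V₁} (hx : x ∉ span K₁ {a}) {ω : V₂}
    (hω : ω ∈ span K₂ {s x}) (hω2 : s a + ω ∈ span K₂ {s (a + x)}) : ω = pick K₂ s a x := by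
  obtain ⟨hp1, hp2⟩ := S.pick_spec hx
  have hI2' : I2 K₂ (s a) (s x) := S.sI2 (I2.of_not_mem S.ha hx)
  obtain ⟨p, hp⟩ := mem_span_singleton.1 hω
  obtain ⟨p', hp'⟩ := mem_span_singleton.1 hp1
  obtain ⟨r, hr⟩ := mem_span_singleton.1 hω2
  obtain ⟨r', hr'⟩ := mem_span_singleton.1 hp2
  have hr'0 : r' ≠ 0 := by
    intro h0
    rw [h0, zero_smul] at hr'
    refine hI2'.symm.not_mem (mem_span_singleton.2 ⟨-p', ?_⟩)
    rw [neg_smul, hp']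
    exact neg_eq_of_add_eq_zero_left hr'.symm
  have heq : s a + ω = (r * r'⁻¹) • (s a + pick K₂ s a x) := by
    rw [← hr, ← hr', smul_smul, mul_assoc, inv_mul_cancel₀ hr'0, mul_one]
  have hz : (s a + p • s x) - (r * r'⁻¹) • (s a + p' • s x) = 0 := by
    rw [hp, hp', heq]; exact sub_self _
  obtain ⟨e1, e2⟩ := hI2' (1 - r * r'⁻¹) (p - r * r'⁻¹ * p') (by rw [← hz]; module)
  rw [sub_eq_zero] at e1 e2
  rw [← hp, ← hp', e2, ← e1, one_mul]

theorem gfun_of_not_mem {x : V₁} (hx : x ∉ span K₁ {a}) : gfun K₁ K₂ s a b x = pick K₂ s a x :=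
  if_neg hx

theorem gfun_spec {x : V₁} (hx : x ∉ span K₁ {a}) :
    gfun K₁ K₂ s a b x ∈ span K₂ {s x} ∧ s a + gfun K₁ K₂ s a b x ∈ span K₂ {s (a + x)} ∧
      gfun K₁ K₂ s a b x ≠ 0 := by
  rw [S.gfun_of_not_mem hx]
  exact ⟨(S.pick_spec hx).1, (S.pick_spec hx).2, S.pick_ne hx⟩

/-- Additivity, main case: `a`, `x`, `y` independent. -/
theorem addA {x y : V₁} (h : I3 K₁ a x y) :
    gfun K₁ K₂ s a b (x + y) = gfun K₁ K₂ s a b x + gfun K₁ K₂ s a b y := by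
  have hax : x ∉ span K₁ {a} := h.i2₁₂.not_mem
  have hay : y ∉ span K₁ {a} := h.i2₁₃.not_mem
  have hxy : x + y ∉ span K₁ {a} := by
    intro hm
    obtain ⟨c, hc⟩ := mem_span_singleton.1 hm
    have hz : c • a - (x + y) = 0 := by rw [hc]; exact sub_self _
    simpa using (h c (-1) (-1) (by rw [← hz]; module)).2.1
  have hxne : x ≠ 0 := h.i2₁₂.ne₂
  have hyne : y ≠ 0 := h.i2₁₃.ne₂
  have haxne : a + x ≠ 0 := add_ne_zero_of_not_mem hax
  have hayne : a + y ≠ 0 := add_ne_zero_of_not_mem hay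
  have hxysum : x + y ≠ 0 := h.i2₂₃.add_ne
  have haxyne : a + (x + y) ≠ 0 := add_ne_zero_of_not_mem hxy
  obtain ⟨hu1, hu2, hu3⟩ := S.gfun_spec (b := b) hax
  obtain ⟨hv1, hv2, hv3⟩ := S.gfun_spec (b := b) hay
  obtain ⟨p, hp⟩ := mem_span_singleton.1 hu1
  have hp0 : p ≠ 0 := fun h0 => hu3 (by rw [← hp, h0, zero_smul])
  obtain ⟨q, hq⟩ := mem_span_singleton.1 hv1
  have hq0 : q ≠ 0 := fun h0 => hv3 (by rw [← hq, h0, zero_smul])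
  have hI3' : I3 K₂ (s a) (s x) (s y) := S.sI3 h
  have hsau_ne : s a + gfun K₁ K₂ s a b x ≠ 0 := by
    intro h0
    refine hI3'.i2₁₂.symm.not_mem (mem_span_singleton.2 ⟨-p, ?_⟩)
    rw [neg_smul, hp]
    exact neg_eq_of_add_eq_zero_left h0
  have hsav_ne : s a + gfun K₁ K₂ s a b y ≠ 0 := by
    intro h0
    refine hI3'.i2₁₃.symm.not_mem (mem_span_singleton.2 ⟨-q, ?_⟩)
    rw [neg_smul, hq]
    exact neg_eq_of_add_eq_zero_left h0
  obtain ⟨r, hr⟩ := mem_span_singleton.1 (mem_span_singleton_comm hsau_ne hu2)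
  obtain ⟨r', hr'⟩ := mem_span_singleton.1 (mem_span_singleton_comm hsav_ne hv2)
  have hT1 : s (a + (x + y)) ∈ span K₂ ({s (a + x), s y} : Set V₂) :=
    S.fwd haxne hyne haxyne (mem_span_pair.2 ⟨1, 1, by module⟩)
  have hT2 : s (a + (x + y)) ∈ span K₂ ({s (a + y), s x} : Set V₂) :=
    S.fwd hayne hxne haxyne (mem_span_pair.2 ⟨1, 1, by module⟩)
  obtain ⟨α', β, hαβ⟩ := mem_span_pair.1 hT1
  obtain ⟨γ', δ, hγδ⟩ := mem_span_pair.1 hT2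
  have hd : (α' • s (a + x) + β • s y) - (γ' • s (a + y) + δ • s x) = 0 := by
    rw [hαβ, hγδ]; exact sub_self _
  rw [← hr, ← hr', ← hp, ← hq] at hd
  obtain ⟨e1, e2, e3⟩ := hI3' (α' * r - γ' * r') (α' * r * p - δ) (β - γ' * r' * q)
    (by rw [← hd]; module)
  rw [sub_eq_zero] at e1 e2 e3
  have hSxy : s (x + y) ∈ span K₂ ({s x, s y} : Set V₂) :=
    S.fwd hxne hyne hxysum (mem_span_pair.2 ⟨1, 1, by module⟩)
  obtain ⟨c₁, c₂, hc⟩ := mem_span_pair.1 hSxy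
  have hT3 : s (a + (x + y)) ∈ span K₂ ({s a, s (x + y)} : Set V₂) :=
    S.fwd S.ha hxysum haxyne (mem_span_pair.2 ⟨1, 1, by module⟩)
  obtain ⟨ε, ζ, hεζ⟩ := mem_span_pair.1 hT3
  have hd2 : (α' • s (a + x) + β • s y) - (ε • s a + ζ • s (x + y)) = 0 := by
    rw [hαβ, hεζ]; exact sub_self _
  rw [← hr, ← hp, ← hc] at hd2
  obtain ⟨f4, f5, f6⟩ := hI3' (α' * r - ε) (α' * r * p - ζ * c₁) (β - ζ * c₂)
    (by rw [← hd2]; module)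
  rw [sub_eq_zero] at f4 f5 f6
  have hE1 : s (a + (x + y)) = (α' * r) • s a + (α' * r * p) • s x + β • s y := by
    rw [← hαβ, ← hr, ← hp]; module
  have f8 : β = α' * r * q := by linear_combination e3 - q * e1
  have hA0 : α' * r ≠ 0 := by
    intro h0
    have hβ : β = 0 := by rw [f8, h0, zero_mul]
    have : s (a + (x + y)) = 0 := by rw [hE1, h0, hβ]; module
    exact S.hs0 _ haxyne this
  have f7 : α' * r * q = ζ * c₂ := f8.symm.trans f6
  have hζ0 : ζ ≠ 0 := by
    intro h0
    rw [h0, zero_mul] at f5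
    exact hp0 ((mul_eq_zero.1 f5).resolve_left hA0)
  have G1 : gfun K₁ K₂ s a b x + gfun K₁ K₂ s a b y ∈ span K₂ {s (x + y)} := by
    have hkey : (α' * r) • (gfun K₁ K₂ s a b x + gfun K₁ K₂ s a b y) = ζ • s (x + y) := by
      rw [← hp, ← hq, ← hc]
      match_scalars
      · linear_combination f5
      · linear_combination f7
    refine mem_span_singleton.2 ⟨(α' * r)⁻¹ * ζ, ?_⟩
    rw [mul_smul, ← hkey, smul_smul, inv_mul_cancel₀ hA0, one_smul]
  have G2 : s a + (gfun K₁ K₂ s a b x + gfun K₁ K₂ s a b y) ∈ span K₂ {s (a + (x + y))} := by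
    have hE2 : s (a + (x + y)) = (α' * r) • (s a + (gfun K₁ K₂ s a b x + gfun K₁ K₂ s a b y)) := by
      rw [hE1, ← hp, ← hq]
      match_scalars
      · ring
      · ring
      · linear_combination f8
    refine mem_span_singleton.2 ⟨(α' * r)⁻¹, ?_⟩
    rw [hE2, smul_smul, inv_mul_cancel₀ hA0, one_smul]
  rw [S.gfun_of_not_mem hxy]
  exact (S.pick_uniq hxy G1 G2).symm

theorem wd1 {x b₁ b₂ : V₁} (h : I3 K₁ a b₁ b₂) (hx : x ∈ span K₁ {a}) :
    pick K₂ s a (x + b₁) - pick K₂ s a b₁ = pick K₂ s a (x + b₂) - pick K₂ s a b₂ := by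
  obtain ⟨c, hc⟩ := mem_span_singleton.1 hx
  have hI1 : I3 K₁ a (x + b₁) b₂ := by have h2 := h.lincol₂ c; rwa [hc] at h2
  have hI2 : I3 K₁ a (x + b₂) b₁ := by have h2 := h.swap₂₃.lincol₂ c; rwa [hc] at h2
  have e1 := S.addA (b := b) hI1
  have e2 := S.addA (b := b) hI2
  have hb₁ : b₁ ∉ span K₁ {a} := h.i2₁₂.not_mem
  have hb₂ : b₂ ∉ span K₁ {a} := h.i2₁₃.not_mem
  have hxb₁ : x + b₁ ∉ span K₁ {a} := mem_add_not_mem hx hb₁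
  have hxb₂ : x + b₂ ∉ span K₁ {a} := mem_add_not_mem hx hb₂
  have hcomm : (x + b₁) + b₂ = (x + b₂) + b₁ := by module
  rw [hcomm] at e1
  have e3 := e1.symm.trans e2
  rw [S.gfun_of_not_mem hxb₁, S.gfun_of_not_mem hxb₂, S.gfun_of_not_mem hb₁,
    S.gfun_of_not_mem hb₂] at e3
  exact sub_eq_sub_iff_add_eq_add.2 e3

theorem wd {x b₁ b₂ : V₁} (hx : x ∈ span K₁ {a}) (hb₁ : b₁ ∉ span K₁ {a})
    (hb₂ : b₂ ∉ span K₁ {a}) :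
    pick K₂ s a (x + b₁) - pick K₂ s a b₁ = pick K₂ s a (x + b₂) - pick K₂ s a b₂ := by
  by_cases hmem : b₂ ∈ span K₁ ({a, b₁} : Set V₁)
  · obtain ⟨b₃, hb₃⟩ := exists_not_mem_span_pair S.h3 a b₁
    have hI31 : I3 K₁ a b₁ b₃ := I3.of (I2.of_not_mem S.ha hb₁) hb₃
    have hb₃2 : b₃ ∉ span K₁ ({a, b₂} : Set V₁) := by
      intro hm
      obtain ⟨p, q, hpq⟩ := mem_span_pair.1 hmem
      obtain ⟨e, f, hef⟩ := mem_span_pair.1 hm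
      exact hb₃ (mem_span_pair.2 ⟨e + f * p, f * q, by rw [← hef, ← hpq]; module⟩)
    have hI32 : I3 K₁ a b₂ b₃ := I3.of (I2.of_not_mem S.ha hb₂) hb₃2
    exact (S.wd1 hI31 hx).trans (S.wd1 hI32 hx).symm
  · exact S.wd1 (I3.of (I2.of_not_mem S.ha hb₁) hmem) hx

theorem gfun_mem_eq {x : V₁} (hx : x ∈ span K₁ {a}) {b' : V₁} (hb' : b' ∉ span K₁ {a}) :
    gfun K₁ K₂ s a b x = pick K₂ s a (x + b') - pick K₂ s a b' := by
  rw [gfun, if_pos hx]; exact S.wd hx S.hb hb'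

omit S in
theorem gfun_zero : gfun K₁ K₂ s a b 0 = 0 := by
  rw [gfun, if_pos (zero_mem _), zero_add, sub_self]

theorem addMem {x y : V₁} (hx : x ∈ span K₁ {a}) (hy : y ∉ span K₁ {a}) :
    gfun K₁ K₂ s a b (x + y) = gfun K₁ K₂ s a b x + gfun K₁ K₂ s a b y := by
  have h1 : gfun K₁ K₂ s a b x = pick K₂ s a (x + y) - pick K₂ s a y := S.gfun_mem_eq hx hy
  rw [S.gfun_of_not_mem (mem_add_not_mem hx hy), S.gfun_of_not_mem hy, h1]
  abel

theorem gneg_notmem {x : V₁} (hx : x ∉ span K₁ {a}) :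
    gfun K₁ K₂ s a b (-x) = - gfun K₁ K₂ s a b x := by
  obtain ⟨z, hz⟩ := exists_not_mem_span_pair S.h3 a x
  have hI3 : I3 K₁ a x z := I3.of (I2.of_not_mem S.ha hx) hz
  have hI3' : I3 K₁ a (x + z) (-x) := by
    intro c d e hcde
    obtain ⟨e1, e2, e3⟩ := hI3 c (d - e) d (by rw [← hcde]; module)
    refine ⟨e1, e3, ?_⟩
    have h4 := sub_eq_zero.1 e2
    rw [e3] at h4
    exact h4.symm
  have e1 := S.addA (b := b) hI3
  have e2 := S.addA (b := b) hI3'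
  have hzz : (x + z) + -x = z := by module
  rw [hzz, e1] at e2
  have h5 : gfun K₁ K₂ s a b x + gfun K₁ K₂ s a b (-x) = 0 := by
    calc gfun K₁ K₂ s a b x + gfun K₁ K₂ s a b (-x)
        = ((gfun K₁ K₂ s a b x + gfun K₁ K₂ s a b z) + gfun K₁ K₂ s a b (-x)) -
            gfun K₁ K₂ s a b z := by abel
      _ = gfun K₁ K₂ s a b z - gfun K₁ K₂ s a b z := by rw [← e2]
      _ = 0 := sub_self _
  exact (neg_eq_of_add_eq_zero_right h5).symm

theorem gneg (x : V₁) : gfun K₁ K₂ s a b (-x) = - gfun K₁ K₂ s a b x := by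
  by_cases hx0 : x = 0
  · rw [hx0, neg_zero, gfun_zero, neg_zero]
  by_cases hx : x ∈ span K₁ {a}
  · have hnb : -b ∉ span K₁ {a} := fun hm => S.hb (by simpa using neg_mem hm)
    have h1 : gfun K₁ K₂ s a b x = pick K₂ s a (x + b) - pick K₂ s a b :=
      S.gfun_mem_eq hx S.hb
    have h2 : gfun K₁ K₂ s a b (-x) = pick K₂ s a (-x + -b) - pick K₂ s a (-b) :=
      S.gfun_mem_eq (neg_mem hx) hnb
    have h3 : -x + -b = -(x + b) := by module
    rw [h3] at h2
    have hxbnm : x + b ∉ span K₁ {a} := mem_add_not_mem hx S.hb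
    have hnxbnm : -(x + b) ∉ span K₁ {a} := fun hm => hxbnm (by simpa using neg_mem hm)
    have h4 := S.gneg_notmem hxbnm
    rw [S.gfun_of_not_mem hnxbnm, S.gfun_of_not_mem hxbnm] at h4
    have h5 := S.gneg_notmem S.hb
    rw [S.gfun_of_not_mem hnb, S.gfun_of_not_mem S.hb] at h5
    rw [h2, h4, h5, h1]
    abel
  · exact S.gneg_notmem hx

theorem gadd (x y : V₁) :
    gfun K₁ K₂ s a b (x + y) = gfun K₁ K₂ s a b x + gfun K₁ K₂ s a b y := by
  by_cases hx0 : x = 0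
  · rw [hx0, zero_add, gfun_zero, zero_add]
  by_cases hy0 : y = 0
  · rw [hy0, add_zero, gfun_zero, add_zero]
  by_cases hx : x ∈ span K₁ {a} <;> by_cases hy : y ∈ span K₁ {a}
  · -- both in span {a}
    have e1 : gfun K₁ K₂ s a b ((x + y) + b) =
        gfun K₁ K₂ s a b (x + y) + gfun K₁ K₂ s a b b := S.addMem (add_mem hx hy) S.hb
    have e2 : gfun K₁ K₂ s a b (x + (y + b)) =
        gfun K₁ K₂ s a b x + gfun K₁ K₂ s a b (y + b) :=
      S.addMem hx (mem_add_not_mem hy S.hb)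
    have e3 : gfun K₁ K₂ s a b (y + b) = gfun K₁ K₂ s a b y + gfun K₁ K₂ s a b b :=
      S.addMem hy S.hb
    have key : gfun K₁ K₂ s a b (x + y) + gfun K₁ K₂ s a b b =
        (gfun K₁ K₂ s a b x + gfun K₁ K₂ s a b y) + gfun K₁ K₂ s a b b := by
      calc gfun K₁ K₂ s a b (x + y) + gfun K₁ K₂ s a b b
          = gfun K₁ K₂ s a b ((x + y) + b) := e1.symm
        _ = gfun K₁ K₂ s a b (x + (y + b)) := by rw [add_assoc]
        _ = gfun K₁ K₂ s a b x + (gfun K₁ K₂ s a b y + gfun K₁ K₂ s a b b) := by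
            rw [e2, e3]
        _ = _ := by abel
    exact add_right_cancel key
  · exact S.addMem hx hy
  · rw [add_comm x y, S.addMem hy hx, add_comm]
  · -- both outside span {a}
    rcases i2_or_mem (K := K₁) hx0 (y := y) with hyx | hI2
    · -- y ∈ span {x}
      obtain ⟨c, hc⟩ := mem_span_singleton.1 hyx
      have hc0 : c ≠ 0 := fun h0 => hy0 (by rw [← hc, h0, zero_smul])
      by_cases hxy0 : x + y = 0
      · have hyx' : -x = y := by
          rw [← neg_eq_of_add_eq_zero_right hxy0]
        rw [hxy0, gfun_zero, ← hyx', S.gneg x]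
        abel
      · obtain ⟨z, hz⟩ := exists_not_mem_span_pair S.h3 a x
        have hI3 : I3 K₁ a x z := I3.of (I2.of_not_mem S.ha hx) hz
        have hc1 : (1 + c) • x = x + y := by rw [← hc]; module
        have hc10 : 1 + c ≠ 0 := fun h0 => hxy0 (by rw [← hc1, h0, zero_smul])
        have hI3sum : I3 K₁ a (x + y) z := by
          have h2 := hI3.smul₂ hc10
          rwa [hc1] at h2
        have hI3yz : I3 K₁ a y z := by
          have h2 := hI3.smul₂ hc0
          rwa [hc] at h2
        have hI3xyz : I3 K₁ a x (y + z) := by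
          have h2 := hI3.lincol₃ 0 c
          rwa [zero_smul, zero_add, hc] at h2
        have e1 := S.addA (b := b) hI3sum
        have e2 := S.addA (b := b) hI3xyz
        have e3 := S.addA (b := b) hI3yz
        have key : gfun K₁ K₂ s a b (x + y) + gfun K₁ K₂ s a b z =
            (gfun K₁ K₂ s a b x + gfun K₁ K₂ s a b y) + gfun K₁ K₂ s a b z := by
          calc gfun K₁ K₂ s a b (x + y) + gfun K₁ K₂ s a b z
              = gfun K₁ K₂ s a b ((x + y) + z) := e1.symm
            _ = gfun K₁ K₂ s a b (x + (y + z)) := by rw [add_assoc]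
            _ = gfun K₁ K₂ s a b x + (gfun K₁ K₂ s a b y + gfun K₁ K₂ s a b z) := by
                rw [e2, e3]
            _ = _ := by abel
        exact add_right_cancel key
    · -- I2 x y
      by_cases hmem_a : a ∈ span K₁ ({x, y} : Set V₁)
      · obtain ⟨z, hz⟩ := exists_not_mem_span_pair S.h3 x y
        have hle_ax : span K₁ ({a, x} : Set V₁) ≤ span K₁ ({x, y} : Set V₁) := by
          rw [span_le]
          rintro t (rfl | rfl)
          · exact hmem_a
          · exact subset_span (Set.mem_insert _ _)
        have hle_ay : span K₁ ({a, y} : Set V₁) ≤ span K₁ ({x, y} : Set V₁) := by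
          rw [span_le]
          rintro t (rfl | rfl)
          · exact hmem_a
          · exact subset_span (Set.mem_insert_of_mem _ rfl)
        have hz_ax : z ∉ span K₁ ({a, x} : Set V₁) := fun hm => hz (hle_ax hm)
        have hz_ay : z ∉ span K₁ ({a, y} : Set V₁) := fun hm => hz (hle_ay hm)
        have hI3ax : I3 K₁ a x z := I3.of (I2.of_not_mem S.ha hx) hz_ax
        have hI3ay : I3 K₁ a y z := I3.of (I2.of_not_mem S.ha hy) hz_ay
        have hyz_nm : y + z ∉ span K₁ ({a, x} : Set V₁) := by
          intro hm
          have hy_mem : y ∈ span K₁ ({x, y} : Set V₁) :=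
            subset_span (Set.mem_insert_of_mem _ rfl)
          have := sub_mem (hle_ax hm) hy_mem
          simpa using hz (by simpa using this)
        have hI3x_yz : I3 K₁ a x (y + z) := I3.of (I2.of_not_mem S.ha hx) hyz_nm
        have e2 := S.addA (b := b) hI3x_yz
        have e3 := S.addA (b := b) hI3ay
        by_cases hxy_a : x + y ∈ span K₁ {a}
        · have hz_a : z ∉ span K₁ {a} := fun hm =>
            hz_ax (span_mono (Set.singleton_subset_iff.2 (Set.mem_insert _ _)) hm)
          have e1 := S.addMem hxy_a hz_a
          have key : gfun K₁ K₂ s a b (x + y) + gfun K₁ K₂ s a b z =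
              (gfun K₁ K₂ s a b x + gfun K₁ K₂ s a b y) + gfun K₁ K₂ s a b z := by
            calc gfun K₁ K₂ s a b (x + y) + gfun K₁ K₂ s a b z
                = gfun K₁ K₂ s a b ((x + y) + z) := e1.symm
              _ = gfun K₁ K₂ s a b (x + (y + z)) := by rw [add_assoc]
              _ = gfun K₁ K₂ s a b x + (gfun K₁ K₂ s a b y + gfun K₁ K₂ s a b z) := by
                  rw [e2, e3]
              _ = _ := by abel
          exact add_right_cancel key
        · have hxy_mem : x + y ∈ span K₁ ({x, y} : Set V₁) :=
            add_mem (subset_span (Set.mem_insert _ _))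
              (subset_span (Set.mem_insert_of_mem _ rfl))
          have hle_axy : span K₁ ({a, x + y} : Set V₁) ≤ span K₁ ({x, y} : Set V₁) := by
            rw [span_le]
            rintro t (rfl | rfl)
            · exact hmem_a
            · exact hxy_mem
          have hz_axy : z ∉ span K₁ ({a, x + y} : Set V₁) := fun hm => hz (hle_axy hm)
          have hI3axy : I3 K₁ a (x + y) z := I3.of (I2.of_not_mem S.ha hxy_a) hz_axy
          have e1 := S.addA (b := b) hI3axy
          have key : gfun K₁ K₂ s a b (x + y) + gfun K₁ K₂ s a b z =
              (gfun K₁ K₂ s a b x + gfun K₁ K₂ s a b y) + gfun K₁ K₂ s a b z := by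
            calc gfun K₁ K₂ s a b (x + y) + gfun K₁ K₂ s a b z
                = gfun K₁ K₂ s a b ((x + y) + z) := e1.symm
              _ = gfun K₁ K₂ s a b (x + (y + z)) := by rw [add_assoc]
              _ = gfun K₁ K₂ s a b x + (gfun K₁ K₂ s a b y + gfun K₁ K₂ s a b z) := by
                  rw [e2, e3]
              _ = _ := by abel
          exact add_right_cancel key
      · have hI3 : I3 K₁ a x y := (I3.of hI2 hmem_a).rotate.rotate
        exact S.addA hI3

theorem gmem (x : V₁) (hx0 : x ≠ 0) :
    gfun K₁ K₂ s a b x ≠ 0 ∧ gfun K₁ K₂ s a b x ∈ span K₂ {s x} := by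
  by_cases hx : x ∈ span K₁ {a}
  · obtain ⟨c, hc⟩ := mem_span_singleton.1 hx
    have hc0 : c ≠ 0 := fun h0 => hx0 (by rw [← hc, h0, zero_smul])
    obtain ⟨b₂, hb₂⟩ := exists_not_mem_span_pair S.h3 a b
    have hI3 : I3 K₁ a b b₂ := I3.of (I2.of_not_mem S.ha S.hb) hb₂
    have hb₂a : b₂ ∉ span K₁ {a} := fun hm =>
      hb₂ (span_mono (Set.singleton_subset_iff.2 (Set.mem_insert _ _)) hm)
    have h1 : gfun K₁ K₂ s a b x = pick K₂ s a (x + b) - pick K₂ s a b :=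
      S.gfun_mem_eq hx S.hb
    have h2 : gfun K₁ K₂ s a b x = pick K₂ s a (x + b₂) - pick K₂ s a b₂ :=
      S.gfun_mem_eq hx hb₂a
    have hxb_nm : x + b ∉ span K₁ {a} := mem_add_not_mem hx S.hb
    have hxb₂_nm : x + b₂ ∉ span K₁ {a} := mem_add_not_mem hx hb₂a
    have hI2ab : I2 K₁ a b := I2.of_not_mem S.ha S.hb
    have hI2xb : I2 K₁ (x + b) b := by
      intro p q hpq
      rw [← hc] at hpq
      obtain ⟨e1, e2⟩ := hI2ab (p * c) (p + q) (by rw [← hpq]; module)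
      have hp : p = 0 := (mul_eq_zero.1 e1).resolve_right hc0
      refine ⟨hp, ?_⟩
      rw [hp] at e2
      simpa using e2
    have hI2' : I2 K₂ (s (x + b)) (s b) := S.sI2 hI2xb
    obtain ⟨r₁, hr₁⟩ := mem_span_singleton.1 (S.pick_spec hxb_nm).1
    have hr₁0 : r₁ ≠ 0 := fun h0 => S.pick_ne hxb_nm (by rw [← hr₁, h0, zero_smul])
    obtain ⟨t, ht⟩ := mem_span_singleton.1 (S.pick_spec S.hb).1
    have ht0 : t ≠ 0 := fun h0 => S.pick_ne S.hb (by rw [← ht, h0, zero_smul])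
    obtain ⟨r₂, hr₂⟩ := mem_span_singleton.1 (S.pick_spec hxb₂_nm).1
    obtain ⟨t₂, ht₂⟩ := mem_span_singleton.1 (S.pick_spec hb₂a).1
    have hne : gfun K₁ K₂ s a b x ≠ 0 := by
      intro h0
      rw [h1, ← hr₁, ← ht] at h0
      obtain ⟨e1, _⟩ := hI2' r₁ (-t) (by rw [← h0]; module)
      exact hr₁0 e1
    have hxbne : x + b ≠ 0 := fun h0 => hxb_nm (h0 ▸ zero_mem _)
    have hxb₂ne : x + b₂ ≠ 0 := fun h0 => hxb₂_nm (h0 ▸ zero_mem _)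
    have hbne : b ≠ 0 := fun h0 => S.hb (h0 ▸ zero_mem _)
    have hb₂ne : b₂ ≠ 0 := fun h0 => hb₂a (h0 ▸ zero_mem _)
    have hsxb : s (x + b) ∈ span K₂ ({s a, s b} : Set V₂) :=
      S.fwd S.ha hbne hxbne (mem_span_pair.2 ⟨c, 1, by rw [hc, one_smul]⟩)
    have hsxb₂ : s (x + b₂) ∈ span K₂ ({s a, s b₂} : Set V₂) :=
      S.fwd S.ha hb₂ne hxb₂ne (mem_span_pair.2 ⟨c, 1, by rw [hc, one_smul]⟩)
    obtain ⟨c₁, c₂, hc₁₂⟩ := mem_span_pair.1 hsxb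
    obtain ⟨d₁, d₂, hd₁₂⟩ := mem_span_pair.1 hsxb₂
    have hI3' : I3 K₂ (s a) (s b) (s b₂) := S.sI3 hI3
    have hz : (r₁ • s (x + b) - t • s b) - (r₂ • s (x + b₂) - t₂ • s b₂) = 0 := by
      rw [hr₁, ht, hr₂, ht₂, ← h1, ← h2]
      exact sub_self _
    rw [← hc₁₂, ← hd₁₂] at hz
    obtain ⟨e1, e2, e3⟩ := hI3' (r₁ * c₁ - r₂ * d₁) (r₁ * c₂ - t) (-(r₂ * d₂ - t₂))
      (by rw [← hz]; module)
    have hmem_sa : gfun K₁ K₂ s a b x ∈ span K₂ {s a} := by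
      refine mem_span_singleton.2 ⟨r₁ * c₁, ?_⟩
      rw [h1, ← hr₁, ← ht, ← hc₁₂]
      match_scalars
      · ring
      · linear_combination -e2
    have hspan : span K₂ ({s x} : Set V₂) = span K₂ ({s a} : Set V₂) :=
      S.spanseq S.ha hx0 hx
    exact ⟨hne, hspan ▸ hmem_sa⟩
  · exact ⟨(S.gfun_spec hx).2.2, (S.gfun_spec hx).1⟩

theorem mucoef {c : K₁} {x : V₁} (hc : c ≠ 0) (hx : x ≠ 0) :
    ∃ d : K₂, d ≠ 0 ∧ gfun K₁ K₂ s a b (c • x) = d • gfun K₁ K₂ s a b x := by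
  have hcx : c • x ≠ 0 := smul_ne_zero hc hx
  obtain ⟨hne, hmem⟩ := S.gmem (c • x) hcx
  obtain ⟨hne', hmem'⟩ := S.gmem x hx
  have hspan : span K₂ ({s (c • x)} : Set V₂) = span K₂ ({s x} : Set V₂) :=
    S.spanseq hx hcx (mem_span_singleton.2 ⟨c, rfl⟩)
  rw [hspan] at hmem
  obtain ⟨r, hr⟩ := mem_span_singleton.1 hmem
  obtain ⟨t, ht⟩ := mem_span_singleton.1 hmem'
  have hr0 : r ≠ 0 := fun h0 => hne (by rw [← hr, h0, zero_smul])
  have ht0 : t ≠ 0 := fun h0 => hne' (by rw [← ht, h0, zero_smul])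
  refine ⟨r * t⁻¹, mul_ne_zero hr0 (inv_ne_zero ht0), ?_⟩
  rw [← hr, ← ht, smul_smul, mul_assoc, inv_mul_cancel₀ ht0, mul_one]

theorem mustep {c : K₁} {x y : V₁} (hc : c ≠ 0) (hx : x ≠ 0) (hy : y ≠ 0)
    (hI : I2 K₁ x y) {d₁ d₂ : K₂}
    (h1 : gfun K₁ K₂ s a b (c • x) = d₁ • gfun K₁ K₂ s a b x)
    (h2 : gfun K₁ K₂ s a b (c • y) = d₂ • gfun K₁ K₂ s a b y) : d₁ = d₂ := by
  obtain ⟨d₃, _, h3⟩ := S.mucoef hc hI.add_ne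
  have hgadd : gfun K₁ K₂ s a b (c • (x + y)) =
      d₁ • gfun K₁ K₂ s a b x + d₂ • gfun K₁ K₂ s a b y := by
    rw [smul_add, S.gadd, h1, h2]
  have h3' : gfun K₁ K₂ s a b (c • (x + y)) =
      d₃ • gfun K₁ K₂ s a b x + d₃ • gfun K₁ K₂ s a b y := by
    rw [h3, S.gadd, smul_add]
  have hgI2 : I2 K₂ (gfun K₁ K₂ s a b x) (gfun K₁ K₂ s a b y) := by
    obtain ⟨hne1, hm1⟩ := S.gmem x hx
    obtain ⟨hne2, hm2⟩ := S.gmem y hy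
    obtain ⟨t₁, ht₁⟩ := mem_span_singleton.1 hm1
    obtain ⟨t₂, ht₂⟩ := mem_span_singleton.1 hm2
    have ht₁0 : t₁ ≠ 0 := fun h0 => hne1 (by rw [← ht₁, h0, zero_smul])
    have ht₂0 : t₂ ≠ 0 := fun h0 => hne2 (by rw [← ht₂, h0, zero_smul])
    rw [← ht₁, ← ht₂]
    exact (S.sI2 hI).smul ht₁0 ht₂0
  have hzz : (d₁ • gfun K₁ K₂ s a b x + d₂ • gfun K₁ K₂ s a b y) -
      (d₃ • gfun K₁ K₂ s a b x + d₃ • gfun K₁ K₂ s a b y) = 0 := by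
    rw [← hgadd, ← h3']
    exact sub_self _
  obtain ⟨e1, e2⟩ := hgI2 (d₁ - d₃) (d₂ - d₃) (by rw [← hzz]; module)
  rw [sub_eq_zero] at e1 e2
  rw [e1, e2]

theorem muconsist {c : K₁} {x y : V₁} (hc : c ≠ 0) (hx : x ≠ 0) (hy : y ≠ 0)
    {d₁ d₂ : K₂}
    (h1 : gfun K₁ K₂ s a b (c • x) = d₁ • gfun K₁ K₂ s a b x)
    (h2 : gfun K₁ K₂ s a b (c • y) = d₂ • gfun K₁ K₂ s a b y) : d₁ = d₂ := by
  rcases i2_or_mem (K := K₁) hx (y := y) with hyx | hI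
  · obtain ⟨z, hz⟩ := exists_not_mem_span_pair S.h3 x y
    have hzx : z ∉ span K₁ {x} := by
      intro hm
      obtain ⟨t, ht⟩ := mem_span_singleton.1 hm
      exact hz (mem_span_pair.2 ⟨t, 0, by rw [← ht]; module⟩)
    have hzy : z ∉ span K₁ {y} := by
      intro hm
      obtain ⟨t, ht⟩ := mem_span_singleton.1 hm
      exact hz (mem_span_pair.2 ⟨0, t, by rw [← ht]; module⟩)
    have hzne : z ≠ 0 := fun h0 => hzx (h0 ▸ zero_mem _)
    obtain ⟨dz, _, hdz⟩ := S.mucoef hc hzne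
    have ea : d₁ = dz := S.mustep hc hx hzne (I2.of_not_mem hx hzx) h1 hdz
    have eb : d₂ = dz := S.mustep hc hy hzne (I2.of_not_mem hy hzy) h2 hdz
    rw [ea, eb]
  · exact S.mustep hc hx hy hI h1 h2

end Setup

/-- The core construction: a collinearity-preserving `s` gives a field homomorphism and a
semilinear additive lift. -/
theorem core {K₁ V₁ K₂ V₂ : Type*} [Field K₁] [AddCommGroup V₁] [Module K₁ V₁]
    [Field K₂] [AddCommGroup V₂] [Module K₂ V₂]
    (h3 : 3 ≤ Module.rank K₁ V₁) (s : V₁ → V₂)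
    (hs0 : ∀ x : V₁, x ≠ 0 → s x ≠ 0)
    (hs : ∀ x y z : V₁, x ≠ 0 → y ≠ 0 → z ≠ 0 →
      (z ∈ span K₁ ({x, y} : Set V₁) ↔ s z ∈ span K₂ ({s x, s y} : Set V₂))) :
    ∃ (μ : K₁ →+* K₂) (g : V₁ → V₂),
      (∀ x y : V₁, g (x + y) = g x + g y) ∧
      (∀ (c : K₁) (x : V₁), g (c • x) = μ c • g x) ∧
      (∀ x : V₁, x ≠ 0 → g x ≠ 0 ∧ g x ∈ span K₂ {s x}) := by
  obtain ⟨a, ha⟩ := exists_ne_zero (K := K₁) h3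
  obtain ⟨b, hb'⟩ := exists_not_mem_span_pair h3 a a
  have hb : b ∉ span K₁ {a} := by rwa [Set.pair_eq_singleton] at hb'
  have S : Setup K₁ K₂ s a b := ⟨h3, hs0, hs, ha, hb⟩
  have hganz : gfun K₁ K₂ s a b a ≠ 0 := (S.gmem a ha).1
  have exmu : ∀ c : K₁, ∃ d : K₂, gfun K₁ K₂ s a b (c • a) = d • gfun K₁ K₂ s a b a ∧ (c = 0 → d = 0) := by
    intro c
    by_cases hc : c = 0
    · refine ⟨0, ?_, fun _ => rfl⟩
      rw [hc, zero_smul, zero_smul, Setup.gfun_zero (K₁ := K₁) (K₂ := K₂) (s := s) (a := a) (b := b)]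
    · obtain ⟨d, hd0, hd⟩ := S.mucoef hc ha
      exact ⟨d, hd, fun h0 => absurd h0 hc⟩
  set μ := fun c : K₁ => (exmu c).choose with hμdef
  have hμ : ∀ c : K₁, gfun K₁ K₂ s a b (c • a) = μ c • gfun K₁ K₂ s a b a := fun c => (exmu c).choose_spec.1
  have hμ0 : μ 0 = 0 := (exmu 0).choose_spec.2 rfl
  have hsemi : ∀ (c : K₁) (x : V₁), gfun K₁ K₂ s a b (c • x) = μ c • gfun K₁ K₂ s a b x := by
    intro c x
    by_cases hc : c = 0
    · rw [hc, zero_smul,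
        Setup.gfun_zero (K₁ := K₁) (K₂ := K₂) (s := s) (a := a) (b := b), hμ0, zero_smul]
    by_cases hx : x = 0
    · rw [hx, smul_zero,
        Setup.gfun_zero (K₁ := K₁) (K₂ := K₂) (s := s) (a := a) (b := b), smul_zero]
    obtain ⟨d, hd0, hd⟩ := S.mucoef hc hx
    have : d = μ c := S.muconsist hc hx ha hd (hμ c)
    rw [hd, this]
  have hμadd : ∀ c e : K₁, μ (c + e) = μ c + μ e := by
    intro c e
    have h1 : μ (c + e) • gfun K₁ K₂ s a b a = (μ c + μ e) • gfun K₁ K₂ s a b a := by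
      rw [← hμ, add_smul, S.gadd, hμ, hμ, add_smul]
    have h2 : (μ (c + e) - (μ c + μ e)) • gfun K₁ K₂ s a b a = 0 := by
      rw [sub_smul, h1, sub_self]
    have := (smul_eq_zero.1 h2).resolve_right hganz
    rwa [sub_eq_zero] at this
  have hμmul : ∀ c e : K₁, μ (c * e) = μ c * μ e := by
    intro c e
    have h1 : μ (c * e) • gfun K₁ K₂ s a b a = (μ c * μ e) • gfun K₁ K₂ s a b a := by
      rw [← hμ, mul_smul, hsemi, hμ, smul_smul]
    have h2 : (μ (c * e) - μ c * μ e) • gfun K₁ K₂ s a b a = 0 := by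
      rw [sub_smul, h1, sub_self]
    have := (smul_eq_zero.1 h2).resolve_right hganz
    rwa [sub_eq_zero] at this
  have hμ1 : μ 1 = 1 := by
    have h1 : μ 1 • gfun K₁ K₂ s a b a = (1 : K₂) • gfun K₁ K₂ s a b a := by
      rw [← hμ, one_smul, one_smul]
    have h2 : (μ 1 - 1) • gfun K₁ K₂ s a b a = 0 := by rw [sub_smul, h1, sub_self]
    have := (smul_eq_zero.1 h2).resolve_right hganz
    rwa [sub_eq_zero] at this
  refine ⟨⟨⟨⟨μ, hμ1⟩, hμmul⟩, hμ0, hμadd⟩, gfun K₁ K₂ s a b, S.gadd, hsemi, fun x hx => (S.gmem x hx)⟩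


end Core

section Bridge

variable {K₁ V₁ K₂ V₂ : Type*} [Field K₁] [AddCommGroup V₁] [Module K₁ V₁]
  [Field K₂] [AddCommGroup V₂] [Module K₂ V₂]

open Projectivization

open Classical in
/-- A choice of representative vectors for the image of a map on projective spaces. -/
noncomputable def sfun (σ : ℙ K₁ V₁ → ℙ K₂ V₂) (x : V₁) : V₂ :=
  if h : x = 0 then 0 else (σ (Projectivization.mk K₁ x h)).rep

theorem sfun_ne (σ : ℙ K₁ V₁ → ℙ K₂ V₂) {x : V₁} (hx : x ≠ 0) : sfun σ x ≠ 0 := by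
  rw [sfun, dif_neg hx]
  exact Projectivization.rep_nonzero _

theorem sfun_mk (σ : ℙ K₁ V₁ → ℙ K₂ V₂) {x : V₁} (hx : x ≠ 0) (h : sfun σ x ≠ 0) :
    Projectivization.mk K₂ (sfun σ x) h = σ (Projectivization.mk K₁ x hx) := by
  have he : sfun σ x = (σ (Projectivization.mk K₁ x hx)).rep := dif_neg hx
  revert h
  rw [he]
  intro h
  exact Projectivization.mk_rep _

theorem sfun_fwd (σ : ℙ K₁ V₁ ≃ ℙ K₂ V₂)
    (hl : ∀ t : Set (ℙ K₁ V₁), IsLine K₁ V₁ t → IsLine K₂ V₂ (σ '' t)) :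
    ∀ x y z : V₁, x ≠ 0 → y ≠ 0 → z ≠ 0 → z ∈ span K₁ ({x, y} : Set V₁) →
      sfun σ z ∈ span K₂ ({sfun σ x, sfun σ y} : Set V₂) := by
  intro x y z hx hy hz hmem
  rcases i2_or_mem (K := K₁) hx (y := y) with hyx | hI2
  · obtain ⟨c, hc⟩ := mem_span_singleton.1 hyx
    obtain ⟨p, q, hpq⟩ := mem_span_pair.1 hmem
    have hz_x : z ∈ span K₁ ({x} : Set V₁) :=
      mem_span_singleton.2 ⟨p + q * c, by rw [← hpq, ← hc]; module⟩
    have hmkzx : Projectivization.mk K₁ z hz = Projectivization.mk K₁ x hx := by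
      rw [Projectivization.mk_eq_mk_iff']
      exact mem_span_singleton.1 hz_x
    have hsz : sfun σ z = sfun σ x := by
      rw [sfun, sfun, dif_neg hz, dif_neg hx, hmkzx]
    rw [hsz]
    exact subset_span (Set.mem_insert _ _)
  · have hW : IsLine K₁ V₁ {p : ℙ K₁ V₁ | p.submodule ≤ span K₁ ({x, y} : Set V₁)} :=
      ⟨span K₁ ({x, y} : Set V₁), finrank_span_pair hI2, rfl⟩
    obtain ⟨W', hW'2, himg⟩ := hl _ hW
    have hmem_img : ∀ (w : V₁) (hw : w ≠ 0), w ∈ span K₁ ({x, y} : Set V₁) →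
        sfun σ w ∈ W' := by
      intro w hw hwmem
      have h1 : σ (Projectivization.mk K₁ w hw) ∈
          σ '' {p : ℙ K₁ V₁ | p.submodule ≤ span K₁ ({x, y} : Set V₁)} := by
        refine Set.mem_image_of_mem σ ?_
        rw [Set.mem_setOf_eq, Projectivization.submodule_mk]
        exact (span_singleton_le_iff_mem _ _).2 hwmem
      rw [himg] at h1
      have h2 : sfun σ w ∈ (σ (Projectivization.mk K₁ w hw)).submodule := by
        rw [sfun, dif_neg hw, Projectivization.submodule_eq]
        exact mem_span_singleton.2 ⟨1, one_smul _ _⟩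
      exact h1 h2
    have hsx : sfun σ x ∈ W' := hmem_img x hx (subset_span (Set.mem_insert _ _))
    have hsy : sfun σ y ∈ W' := hmem_img y hy (subset_span (Set.mem_insert_of_mem _ rfl))
    have hsz : sfun σ z ∈ W' := hmem_img z hz hmem
    have hI2' : I2 K₂ (sfun σ x) (sfun σ y) := by
      refine I2.of_not_mem (sfun_ne σ hx) ?_
      intro hm
      have hmk : Projectivization.mk K₂ (sfun σ y) (sfun_ne σ hy) =
          Projectivization.mk K₂ (sfun σ x) (sfun_ne σ hx) := by
        rw [Projectivization.mk_eq_mk_iff']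
        exact mem_span_singleton.1 hm
      rw [sfun_mk σ hy, sfun_mk σ hx] at hmk
      have h3 := σ.injective hmk
      rw [Projectivization.mk_eq_mk_iff'] at h3
      exact hI2.not_mem (mem_span_singleton.2 h3)
    have hle : span K₂ ({sfun σ x, sfun σ y} : Set V₂) ≤ W' := by
      rw [span_le]
      rintro t (rfl | rfl)
      · exact hsx
      · exact hsy
    have : FiniteDimensional K₂ W' :=
      FiniteDimensional.of_finrank_pos (by rw [hW'2]; norm_num)
    have heq : span K₂ ({sfun σ x, sfun σ y} : Set V₂) = W' :=
      Submodule.eq_of_le_of_finrank_le hle (by rw [hW'2, finrank_span_pair hI2'])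
    rw [heq]
    exact hsz

theorem sfun_back (σ : ℙ K₁ V₁ ≃ ℙ K₂ V₂) {w : V₁} (hw : w ≠ 0) :
    ∃ t : K₁, t ≠ 0 ∧ sfun (⇑σ.symm) (sfun (⇑σ) w) = t • w := by
  have hmk1 := sfun_mk (⇑σ) hw (sfun_ne (⇑σ) hw)
  have hmk2 := sfun_mk (⇑σ.symm) (sfun_ne (⇑σ) hw)
    (sfun_ne (⇑σ.symm) (sfun_ne (⇑σ) hw))
  rw [hmk1, Equiv.symm_apply_apply] at hmk2
  rw [Projectivization.mk_eq_mk_iff'] at hmk2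
  obtain ⟨t, ht⟩ := hmk2
  have ht0 : t ≠ 0 := fun h0 =>
    sfun_ne (⇑σ.symm) (sfun_ne (⇑σ) hw) (by rw [← ht, h0, zero_smul])
  exact ⟨t, ht0, ht.symm⟩

theorem sfun_hs (σ : ℙ K₁ V₁ ≃ ℙ K₂ V₂)
    (hl : ∀ t : Set (ℙ K₁ V₁), IsLine K₁ V₁ t → IsLine K₂ V₂ (σ '' t))
    (hl' : ∀ t : Set (ℙ K₂ V₂), IsLine K₂ V₂ t → IsLine K₁ V₁ (σ.symm '' t)) :
    ∀ x y z : V₁, x ≠ 0 → y ≠ 0 → z ≠ 0 →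
      (z ∈ span K₁ ({x, y} : Set V₁) ↔
        sfun (⇑σ) z ∈ span K₂ ({sfun (⇑σ) x, sfun (⇑σ) y} : Set V₂)) := by
  intro x y z hx hy hz
  constructor
  · exact sfun_fwd σ hl x y z hx hy hz
  · intro hm
    have h1 := sfun_fwd σ.symm hl' (sfun (⇑σ) x) (sfun (⇑σ) y) (sfun (⇑σ) z)
      (sfun_ne _ hx) (sfun_ne _ hy) (sfun_ne _ hz) hm
    obtain ⟨tx, htx0, htx⟩ := sfun_back σ hx
    obtain ⟨ty, hty0, hty⟩ := sfun_back σ hy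
    obtain ⟨tz, htz0, htz⟩ := sfun_back σ hz
    rw [htx, hty, htz] at h1
    obtain ⟨p, q, hpq⟩ := mem_span_pair.1 h1
    refine mem_span_pair.2 ⟨tz⁻¹ * (p * tx), tz⁻¹ * (q * ty), ?_⟩
    calc (tz⁻¹ * (p * tx)) • x + (tz⁻¹ * (q * ty)) • y
        = tz⁻¹ • (p • (tx • x) + q • (ty • y)) := by module
      _ = tz⁻¹ • (tz • z) := by rw [hpq]
      _ = z := by rw [smul_smul, inv_mul_cancel₀ htz0, one_smul]

end Bridge

end FTPG

/-- **Fundamental theorem of projective geometry.** Let `V_i` be a `k_i`-vector space of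
dimension `≥ 3` (`i = 1, 2`) and let `σ : ℙ(V₁) → ℙ(V₂)` be a bijection carrying lines
onto lines (a collineation).  Then `σ` is induced by a field isomorphism `μ : k₁ → k₂`
together with a `μ`-semilinear additive bijection `λ : V₁ → V₂`; moreover `μ` is unique
and `λ` is unique up to precomposition with multiplication by a unique scalar
`a ∈ k₁^×`. -/
theorem fundamental_theorem_projective_geometry
    (k₁ k₂ V₁ V₂ : Type*) [Field k₁] [Field k₂]
    [AddCommGroup V₁] [Module k₁ V₁] [AddCommGroup V₂] [Module k₂ V₂]
    (hd₁ : 3 ≤ Module.rank k₁ V₁) (hd₂ : 3 ≤ Module.rank k₂ V₂)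
    (σ : ℙ k₁ V₁ ≃ ℙ k₂ V₂)
    (hl : ∀ s : Set (ℙ k₁ V₁), IsLine k₁ V₁ s → IsLine k₂ V₂ (σ '' s))
    (hl' : ∀ s : Set (ℙ k₂ V₂), IsLine k₂ V₂ s → IsLine k₁ V₁ (σ.symm '' s)) :
    ∃ (μ : k₁ ≃+* k₂) (e : V₁ ≃+ V₂),
      (∀ (a : k₁) (x : V₁), e (a • x) = μ a • e x) ∧
      (∀ (x : V₁) (hx : x ≠ 0),
        σ (Projectivization.mk k₁ x hx) =
          Projectivization.mk k₂ (e x)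
            (fun h => hx (by rw [← e.symm_apply_apply x, h, map_zero]))) ∧
      ∀ (μ' : k₁ ≃+* k₂) (e' : V₁ ≃+ V₂),
        (∀ (a : k₁) (x : V₁), e' (a • x) = μ' a • e' x) →
        (∀ (x : V₁) (hx : x ≠ 0),
          σ (Projectivization.mk k₁ x hx) =
            Projectivization.mk k₂ (e' x)
              (fun h => hx (by rw [← e'.symm_apply_apply x, h, map_zero]))) →
        μ' = μ ∧ ∃! a : k₁ˣ, ∀ x : V₁, e' x = e ((a : k₁) • x) := by
  classical
  obtain ⟨μ, g, gadd, gsemi, gmem⟩ := FTPG.core hd₁ (FTPG.sfun (⇑σ))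
    (fun x hx => FTPG.sfun_ne (⇑σ) hx) (FTPG.sfun_hs σ hl hl')
  obtain ⟨μ', g', gadd', gsemi', gmem'⟩ := FTPG.core hd₂ (FTPG.sfun (⇑σ.symm))
    (fun x hx => FTPG.sfun_ne (⇑σ.symm) hx)
    (FTPG.sfun_hs σ.symm hl' (fun t ht => by rw [Equiv.symm_symm]; exact hl t ht))
  have hg0 : g 0 = 0 := by
    have h00 := gadd 0 0
    rw [add_zero] at h00
    have h01 : g 0 + g 0 = g 0 + 0 := by rw [add_zero]; exact h00.symm
    exact add_left_cancel h01
  have hgmk : ∀ (x : V₁) (hx : x ≠ 0) (h : g x ≠ 0),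
      Projectivization.mk k₂ (g x) h = σ (Projectivization.mk k₁ x hx) := by
    intro x hx h
    obtain ⟨hne, hmem⟩ := gmem x hx
    have hmk : Projectivization.mk k₂ (g x) h =
        Projectivization.mk k₂ (FTPG.sfun (⇑σ) x) (FTPG.sfun_ne (⇑σ) hx) := by
      rw [Projectivization.mk_eq_mk_iff']
      exact Submodule.mem_span_singleton.1 hmem
    rw [hmk, FTPG.sfun_mk (⇑σ) hx]
  have hg'mk : ∀ (y : V₂) (hy : y ≠ 0) (h : g' y ≠ 0),
      Projectivization.mk k₁ (g' y) h = σ.symm (Projectivization.mk k₂ y hy) := by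
    intro y hy h
    obtain ⟨hne, hmem⟩ := gmem' y hy
    have hmk : Projectivization.mk k₁ (g' y) h =
        Projectivization.mk k₁ (FTPG.sfun (⇑σ.symm) y) (FTPG.sfun_ne (⇑σ.symm) hy) := by
      rw [Projectivization.mk_eq_mk_iff']
      exact Submodule.mem_span_singleton.1 hmem
    rw [hmk, FTPG.sfun_mk (⇑σ.symm) hy]
  have hgg' : ∃ d : k₂, d ≠ 0 ∧ ∀ y : V₂, g (g' y) = d • y := by
    apply FTPG.exists_smul_eq_of_mem_span hd₂ (fun y => g (g' y))
    · intro u v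
      rw [gadd', gadd]
    · intro y hy
      have h1 : g' y ≠ 0 := (gmem' y hy).1
      have h2 : g (g' y) ≠ 0 := (gmem _ h1).1
      refine ⟨h2, ?_⟩
      have e1 := hgmk (g' y) h1 h2
      have e2 := hg'mk y hy h1
      rw [e2, Equiv.apply_symm_apply] at e1
      rw [Projectivization.mk_eq_mk_iff'] at e1
      exact Submodule.mem_span_singleton.2 e1
  obtain ⟨d, hd0, hd⟩ := hgg'
  obtain ⟨y₀, hy₀⟩ := FTPG.exists_ne_zero (K := k₂) hd₂
  have hμμ' : ∀ c : k₂, μ (μ' c) = c := by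
    intro c
    have h1 : g (g' (c • y₀)) = d • (c • y₀) := hd _
    rw [gsemi', gsemi, hd] at h1
    have h2 : (μ (μ' c) * d - d * c) • y₀ = 0 := by
      rw [sub_smul, mul_smul, mul_smul, h1, sub_self]
    have h3 := (smul_eq_zero.1 h2).resolve_right hy₀
    rw [sub_eq_zero] at h3
    exact mul_right_cancel₀ hd0 (h3.trans (mul_comm d c))
  have hμbij : Function.Bijective μ :=
    ⟨μ.injective, fun c => ⟨μ' c, hμμ' c⟩⟩
  let μe : k₁ ≃+* k₂ := RingEquiv.ofBijective μ hμbij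
  have hμe : ∀ c : k₁, μe c = μ c := fun _ => rfl
  have hginj : Function.Injective g := by
    intro u v huv
    by_contra hne
    have huv0 : u - v ≠ 0 := sub_ne_zero.2 hne
    have h1 : g (u - v) = 0 := by
      have h2 : g (u - v) + g v = g u := by rw [← gadd, sub_add_cancel]
      rw [huv] at h2
      have h3 : g (u - v) + g v = 0 + g v := by rw [zero_add]; exact h2
      exact add_right_cancel h3
    exact (gmem _ huv0).1 h1
  have hgsurj : Function.Surjective g := by
    intro y
    by_cases hy : y = 0
    · exact ⟨0, by rw [hg0, hy]⟩
    · refine ⟨μe.symm d⁻¹ • g' y, ?_⟩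
      rw [gsemi]
      have h1 : μ (μe.symm d⁻¹) = d⁻¹ := μe.apply_symm_apply d⁻¹
      rw [h1, hd, smul_smul, inv_mul_cancel₀ hd0, one_smul]
  let e : V₁ ≃+ V₂ := AddEquiv.ofBijective (AddMonoidHom.mk' g gadd) ⟨hginj, hgsurj⟩
  have he : ∀ x : V₁, e x = g x := fun _ => rfl
  refine ⟨μe, e, ?_, ?_, ?_⟩
  · intro c x
    rw [he, he, hμe]
    exact gsemi c x
  · intro x hx
    have hgx : g x ≠ 0 := (gmem x hx).1
    exact (hgmk x hx hgx).symm
  · intro μ'' e'' hsemi'' hmk''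
    have hcomp : ∃ c : k₂, c ≠ 0 ∧ ∀ y : V₂, e'' (e.symm y) = c • y := by
      apply FTPG.exists_smul_eq_of_mem_span hd₂ (fun y => e'' (e.symm y))
      · intro u v
        rw [map_add, map_add]
      · intro y hy
        have h1 : e.symm y ≠ 0 := fun h0 => hy (by rw [← e.apply_symm_apply y, h0, map_zero])
        have h2 : e'' (e.symm y) ≠ 0 := fun h0 =>
          h1 (by rw [← e''.symm_apply_apply (e.symm y), h0, map_zero])
        refine ⟨h2, ?_⟩
        have r1 := hmk'' (e.symm y) h1
        have r2 : σ (Projectivization.mk k₁ (e.symm y) h1) = Projectivization.mk k₂ y hy := by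
          rw [← hgmk (e.symm y) h1 ((gmem _ h1).1)]
          have h3 : g (e.symm y) = y := by rw [← he, e.apply_symm_apply]
          rw [Projectivization.mk_eq_mk_iff']
          exact ⟨1, by rw [one_smul, h3]⟩
        rw [r2] at r1
        rw [Projectivization.mk_eq_mk_iff'] at r1
        obtain ⟨t, ht⟩ := r1
        have ht0 : t ≠ 0 := fun h0 => hy (by rw [← ht, h0, zero_smul])
        have h5 : t⁻¹ • (t • e'' (e.symm y)) = t⁻¹ • y := by rw [ht]
        rw [smul_smul, inv_mul_cancel₀ ht0, one_smul] at h5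
        exact Submodule.mem_span_singleton.2 ⟨t⁻¹, h5.symm⟩
    obtain ⟨c, hc0, hc⟩ := hcomp
    have hc' : ∀ x : V₁, e'' x = c • e x := by
      intro x
      have := hc (e x)
      rwa [e.symm_apply_apply] at this
    obtain ⟨x₀, hx₀⟩ := FTPG.exists_ne_zero (K := k₁) hd₁
    have hgx₀ : g x₀ ≠ 0 := (gmem x₀ hx₀).1
    constructor
    · ext t
      have h1 : e'' (t • x₀) = μ'' t • e'' x₀ := hsemi'' t x₀
      rw [hc', hc', he, he, gsemi] at h1
      have h2 : (c * μ t - μ'' t * c) • g x₀ = 0 := by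
        rw [sub_smul, mul_smul, mul_smul, h1, sub_self]
      have h3 := (smul_eq_zero.1 h2).resolve_right hgx₀
      rw [sub_eq_zero] at h3
      have h4 : c * μ t = c * μ'' t := h3.trans (mul_comm _ _)
      have h5 := mul_left_cancel₀ hc0 h4
      rw [hμe]
      exact h5.symm
    · have hcsne : μe.symm c ≠ 0 := fun h0 =>
        hc0 (by rw [← μe.apply_symm_apply c, h0, map_zero])
      refine ⟨Units.mk0 (μe.symm c) hcsne, ?_, ?_⟩
      · intro x
        have h1 : μ (μe.symm c) = c := μe.apply_symm_apply c
        rw [hc' x, he, he, gsemi, Units.val_mk0, h1]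
      · intro u hu
        have h1 : μ (μe.symm c) = c := μe.apply_symm_apply c
        have h2a : e ((u : k₁) • x₀) = c • g x₀ := by
          rw [← hu x₀, hc' x₀, he]
        have h2b : e ((μe.symm c) • x₀) = c • g x₀ := by
          rw [he, gsemi, h1]
        have h3 : (u : k₁) • x₀ = (μe.symm c) • x₀ := e.injective (h2a.trans h2b.symm)
        have h4 : ((u : k₁) - μe.symm c) • x₀ = 0 := by rw [sub_smul, h3, sub_self]
        have h5 := (smul_eq_zero.1 h4).resolve_right hx₀
        rw [sub_eq_zero] at h5
        exact Units.ext h5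
end

section
/- (Desargues' theorem in ℙ(V)) Let k be a field, V a k-vector space, and p₁, p₂, p₃, q₁, q₂, q₃ ∈ ℙ(V) such that p₁, p₂, p₃ are not collinear, q₁, q₂, q₃ are not collinear, and p_i ≠ q_i for i = 1, 2, 3. Then the three lines p₁∨q₁, p₂∨q₂, p₃∨q₃ are concurrent if and only if the three intersection points (p₂∨p₃)∩(q₂∨q₃), (p₃∨p₁)∩(q₃∨q₁), (p₁∨p₂)∩(q₁∨q₂) exist and are collinear. -/
open scoped LinearAlgebra.Projectivization

/-- The line `p ∨ q` of `ℙ K V` through two (distinct) points `p, q`. -/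
def projJoin (K V : Type*) [Field K] [AddCommGroup V] [Module K V]
    (p q : ℙ K V) : Set (ℙ K V) :=
  {x : ℙ K V | x.submodule ≤ p.submodule ⊔ q.submodule}

/-- A set of points of `ℙ K V` is collinear if all its points lie in a common subspace of
dimension at most `2` (i.e. on a common line). -/
def ProjCollinear (K V : Type*) [Field K] [AddCommGroup V] [Module K V]
    (s : Set (ℙ K V)) : Prop :=
  ∃ W : Submodule K V, Module.rank K W ≤ 2 ∧ ∀ x ∈ s, x.submodule ≤ W

section Helpers

open Submodule Projectivization

variable {k V : Type*} [Field k] [AddCommGroup V] [Module k V]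

lemma rank_span_pair_le' (x y : V) : Module.rank k (span k ({x, y} : Set V)) ≤ 2 := by
  refine (rank_span_le _).trans (le_trans Cardinal.mk_insert_le ?_)
  simp
  norm_num

lemma join_submodule' (p q : ℙ k V) :
    p.submodule ⊔ q.submodule = span k {p.rep, q.rep} := by
  rw [Projectivization.submodule_eq, Projectivization.submodule_eq, ← span_union,
    Set.singleton_union]

lemma mem_projJoin_iff' (p q x : ℙ k V) :
    x ∈ projJoin k V p q ↔ x.rep ∈ span k {p.rep, q.rep} := by
  rw [projJoin, Set.mem_setOf_eq, join_submodule', Projectivization.submodule_eq]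
  exact span_singleton_le_iff_mem _ _

lemma mk_mem_projJoin' {w : V} (hw : w ≠ 0) (p q : ℙ k V)
    (h : w ∈ span k {p.rep, q.rep}) : Projectivization.mk k w hw ∈ projJoin k V p q := by
  show (Projectivization.mk k w hw).submodule ≤ _
  rw [Projectivization.submodule_mk, join_submodule']
  exact (span_singleton_le_iff_mem _ _).2 h

lemma zero_coeffs' {u₁ u₂ u₃ : V} (hu : LinearIndependent k ![u₁, u₂, u₃])
    {a b c : k} (h : a • u₁ + b • u₂ + c • u₃ = 0) : a = 0 ∧ b = 0 ∧ c = 0 := by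
  have := Fintype.linearIndependent_iff.1 hu ![a, b, c]
    (by simpa [Fin.sum_univ_three] using h)
  exact ⟨this 0, this 1, this 2⟩

lemma not_indep_of_rank_le' {W : Submodule k V} (hW : Module.rank k W ≤ 2)
    {w₁ w₂ w₃ : V} (h₁ : w₁ ∈ W) (h₂ : w₂ ∈ W) (h₃ : w₃ ∈ W) :
    ¬ LinearIndependent k ![w₁, w₂, w₃] := by
  intro h
  have hf : LinearIndependent k
      (fun i : Fin 3 => (⟨![w₁, w₂, w₃] i, by fin_cases i <;> assumption⟩ : W)) := by
    apply LinearIndependent.of_comp W.subtype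
    convert h
    rfl
  have h3 : (3 : Cardinal) ≤ Module.rank k W := by
    simpa using hf.cardinal_lift_le_rank
  have := h3.trans hW
  norm_num at this

lemma key_ne' {α β α' β' : V} (hα' : α' ≠ 0) (hβ' : β' ≠ 0) {a b a' b' : k}
    (hw : a • α + b • β = a' • α' + b' • β')
    (hwne : a • α + b • β ≠ 0)
    (hne1 : ∀ t : k, t • α' ≠ α) (hne2 : ∀ t : k, t • β' ≠ β) :
    a • α - a' • α' ≠ 0 := by
  intro h0
  have h : a • α = a' • α' := sub_eq_zero.1 h0
  by_cases ha : a = 0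
  · have ha' : a' = 0 := by
      rcases smul_eq_zero.1 (show a' • α' = 0 by rw [← h, ha, zero_smul]) with h' | h'
      · exact h'
      · exact absurd h' hα'
    rw [ha, zero_smul, zero_add] at hw hwne
    rw [ha', zero_smul, zero_add] at hw
    have hb : b ≠ 0 := fun hb => hwne (by rw [hb, zero_smul])
    exact hne2 (b⁻¹ * b') (by rw [mul_smul, ← hw, inv_smul_smul₀ hb])
  · exact hne1 (a⁻¹ * a') (by rw [mul_smul, ← h, inv_smul_smul₀ ha])

lemma hne_of_ne' {p q : ℙ k V} (h : p ≠ q) : ∀ t : k, t • q.rep ≠ p.rep := by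
  intro t ht
  apply h
  conv_lhs => rw [← p.mk_rep]
  conv_rhs => rw [← q.mk_rep]
  exact (mk_eq_mk_iff' k _ _ p.rep_nonzero q.rep_nonzero).2 ⟨t, ht⟩

lemma nc_ne' {a b c : ℙ k V} (h : ¬ ProjCollinear k V {a, b, c}) :
    a ≠ b ∧ b ≠ c ∧ c ≠ a := by
  have aux : ∀ (x y : ℙ k V) (s : Set (ℙ k V)),
      (∀ z ∈ s, z = x ∨ z = y) → ¬ ProjCollinear k V s → False := by
    intro x y s hs hncol
    refine hncol ⟨span k {x.rep, y.rep}, rank_span_pair_le' _ _, ?_⟩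
    intro z hz
    rw [Projectivization.submodule_eq]
    refine (span_singleton_le_iff_mem _ _).2 ?_
    rcases hs z hz with rfl | rfl <;> exact subset_span (by simp)
  have mem3 : ∀ (x y w z : ℙ k V), z ∈ ({x, y, w} : Set (ℙ k V)) → z = x ∨ z = y ∨ z = w := by
    intro x y w z hz
    simpa [Set.mem_insert_iff, Set.mem_singleton_iff] using hz
  refine ⟨?_, ?_, ?_⟩
  · rintro rfl
    refine aux a c _ (fun z hz => ?_) h
    rcases mem3 _ _ _ _ hz with rfl | rfl | rfl
    exacts [Or.inl rfl, Or.inl rfl, Or.inr rfl]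
  · rintro rfl
    refine aux a b _ (fun z hz => ?_) h
    rcases mem3 _ _ _ _ hz with rfl | rfl | rfl
    exacts [Or.inl rfl, Or.inr rfl, Or.inr rfl]
  · rintro rfl
    refine aux c b _ (fun z hz => ?_) h
    rcases mem3 _ _ _ _ hz with rfl | rfl | rfl
    exacts [Or.inl rfl, Or.inr rfl, Or.inl rfl]

lemma indep_of_not_collinear' {a b c : ℙ k V} (h : ¬ ProjCollinear k V {a, b, c}) :
    LinearIndependent k ![a.rep, b.rep, c.rep] := by
  by_contra hind
  obtain ⟨g, hg, i, hgi⟩ := Fintype.not_linearIndependent_iff.1 hind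
  simp only [Fin.sum_univ_three, Matrix.cons_val_zero, Matrix.cons_val_one, Matrix.head_cons,
    Matrix.cons_val_two, Matrix.tail_cons] at hg
  apply h
  fin_cases i
  · refine ⟨span k {b.rep, c.rep}, rank_span_pair_le' _ _, ?_⟩
    have ha : a.rep ∈ span k ({b.rep, c.rep} : Set V) := by
      have : g 0 • a.rep ∈ span k ({b.rep, c.rep} : Set V) := by
        rw [show g 0 • a.rep = -(g 1 • b.rep) - g 2 • c.rep by
          linear_combination (norm := module) hg]
        exact sub_mem (neg_mem (smul_mem _ _ (subset_span (by simp))))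
          (smul_mem _ _ (subset_span (by simp)))
      have hgi' : g 0 ≠ 0 := by simpa using hgi
      have h2 := smul_mem _ (g 0)⁻¹ this
      rwa [inv_smul_smul₀ hgi'] at h2
    intro z hz
    rw [Projectivization.submodule_eq]
    refine (span_singleton_le_iff_mem _ _).2 ?_
    rcases hz with rfl | rfl | rfl
    · exact ha
    · exact subset_span (by simp)
    · exact subset_span (by simp)
  · refine ⟨span k {a.rep, c.rep}, rank_span_pair_le' _ _, ?_⟩
    have hb : b.rep ∈ span k ({a.rep, c.rep} : Set V) := by
      have : g 1 • b.rep ∈ span k ({a.rep, c.rep} : Set V) := by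
        rw [show g 1 • b.rep = -(g 0 • a.rep) - g 2 • c.rep by
          linear_combination (norm := module) hg]
        exact sub_mem (neg_mem (smul_mem _ _ (subset_span (by simp))))
          (smul_mem _ _ (subset_span (by simp)))
      have hgi' : g 1 ≠ 0 := by simpa using hgi
      have h2 := smul_mem _ (g 1)⁻¹ this
      rwa [inv_smul_smul₀ hgi'] at h2
    intro z hz
    rw [Projectivization.submodule_eq]
    refine (span_singleton_le_iff_mem _ _).2 ?_
    rcases hz with rfl | rfl | rfl
    · exact subset_span (by simp)
    · exact hb
    · exact subset_span (by simp)
  · refine ⟨span k {a.rep, b.rep}, rank_span_pair_le' _ _, ?_⟩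
    have hc : c.rep ∈ span k ({a.rep, b.rep} : Set V) := by
      have : g 2 • c.rep ∈ span k ({a.rep, b.rep} : Set V) := by
        rw [show g 2 • c.rep = -(g 0 • a.rep) - g 1 • b.rep by
          linear_combination (norm := module) hg]
        exact sub_mem (neg_mem (smul_mem _ _ (subset_span (by simp))))
          (smul_mem _ _ (subset_span (by simp)))
      have hgi' : g 2 ≠ 0 := by simpa using hgi
      have h2 := smul_mem _ (g 2)⁻¹ this
      rwa [inv_smul_smul₀ hgi'] at h2
    intro z hz
    rw [Projectivization.submodule_eq]
    refine (span_singleton_le_iff_mem _ _).2 ?_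
    rcases hz with rfl | rfl | rfl
    · exact subset_span (by simp)
    · exact subset_span (by simp)
    · exact hc

end Helpers

open Submodule Projectivization

/-- **Desargues' theorem** in `ℙ(V)`.  Given two triangles `p₁p₂p₃` and `q₁q₂q₃` with
`p_i ≠ q_i`, the lines `p₁∨q₁`, `p₂∨q₂`, `p₃∨q₃` are concurrent if and only if the
intersection points `(p₂∨p₃)∩(q₂∨q₃)`, `(p₃∨p₁)∩(q₃∨q₁)`, `(p₁∨p₂)∩(q₁∨q₂)` exist and
are collinear. -/
theorem desargues (k V : Type*) [Field k] [AddCommGroup V] [Module k V]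
    (p₁ p₂ p₃ q₁ q₂ q₃ : ℙ k V)
    (hp : ¬ ProjCollinear k V {p₁, p₂, p₃}) (hq : ¬ ProjCollinear k V {q₁, q₂, q₃})
    (h1 : p₁ ≠ q₁) (h2 : p₂ ≠ q₂) (h3 : p₃ ≠ q₃) :
    (projJoin k V p₁ q₁ ∩ projJoin k V p₂ q₂ ∩ projJoin k V p₃ q₃).Nonempty ↔
      ∃ r₁ r₂ r₃ : ℙ k V,
        r₁ ∈ projJoin k V p₂ p₃ ∩ projJoin k V q₂ q₃ ∧
        r₂ ∈ projJoin k V p₃ p₁ ∩ projJoin k V q₃ q₁ ∧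
        r₃ ∈ projJoin k V p₁ p₂ ∩ projJoin k V q₁ q₂ ∧
        ProjCollinear k V {r₁, r₂, r₃} := by
  have hu := indep_of_not_collinear' hp
  have hv := indep_of_not_collinear' hq
  obtain ⟨hp12, hp23, hp31⟩ := nc_ne' hp
  obtain ⟨hq12, hq23, hq31⟩ := nc_ne' hq
  constructor
  · rintro ⟨r, ⟨hr1, hr2⟩, hr3⟩
    obtain ⟨α₁, β₁, e₁⟩ := Submodule.mem_span_pair.1 ((mem_projJoin_iff' _ _ _).1 hr1)
    obtain ⟨α₂, β₂, e₂⟩ := Submodule.mem_span_pair.1 ((mem_projJoin_iff' _ _ _).1 hr2)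
    obtain ⟨α₃, β₃, e₃⟩ := Submodule.mem_span_pair.1 ((mem_projJoin_iff' _ _ _).1 hr3)
    have hw1 : α₂ • p₂.rep - α₃ • p₃.rep ≠ 0 :=
      key_ne' p₃.rep_nonzero q₃.rep_nonzero (e₂.trans e₃.symm)
        (by rw [e₂]; exact r.rep_nonzero) (hne_of_ne' hp23) (hne_of_ne' hq23)
    have hw2 : α₃ • p₃.rep - α₁ • p₁.rep ≠ 0 :=
      key_ne' p₁.rep_nonzero q₁.rep_nonzero (e₃.trans e₁.symm)
        (by rw [e₃]; exact r.rep_nonzero) (hne_of_ne' hp31) (hne_of_ne' hq31)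
    have hw3 : α₁ • p₁.rep - α₂ • p₂.rep ≠ 0 :=
      key_ne' p₂.rep_nonzero q₂.rep_nonzero (e₁.trans e₂.symm)
        (by rw [e₁]; exact r.rep_nonzero) (hne_of_ne' hp12) (hne_of_ne' hq12)
    have m1p : α₂ • p₂.rep - α₃ • p₃.rep ∈ span k {p₂.rep, p₃.rep} :=
      Submodule.mem_span_pair.2 ⟨α₂, -α₃, by module⟩
    have m1q : α₂ • p₂.rep - α₃ • p₃.rep ∈ span k {q₂.rep, q₃.rep} :=
      Submodule.mem_span_pair.2 ⟨-β₂, β₃, by linear_combination (norm := module) e₃ - e₂⟩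
    have m2p : α₃ • p₃.rep - α₁ • p₁.rep ∈ span k {p₃.rep, p₁.rep} :=
      Submodule.mem_span_pair.2 ⟨α₃, -α₁, by module⟩
    have m2q : α₃ • p₃.rep - α₁ • p₁.rep ∈ span k {q₃.rep, q₁.rep} :=
      Submodule.mem_span_pair.2 ⟨-β₃, β₁, by linear_combination (norm := module) e₁ - e₃⟩
    have m3p : α₁ • p₁.rep - α₂ • p₂.rep ∈ span k {p₁.rep, p₂.rep} :=
      Submodule.mem_span_pair.2 ⟨α₁, -α₂, by module⟩
    have m3q : α₁ • p₁.rep - α₂ • p₂.rep ∈ span k {q₁.rep, q₂.rep} :=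
      Submodule.mem_span_pair.2 ⟨-β₁, β₂, by linear_combination (norm := module) e₂ - e₁⟩
    refine ⟨Projectivization.mk k _ hw1, Projectivization.mk k _ hw2,
      Projectivization.mk k _ hw3,
      ⟨mk_mem_projJoin' hw1 _ _ m1p, mk_mem_projJoin' hw1 _ _ m1q⟩,
      ⟨mk_mem_projJoin' hw2 _ _ m2p, mk_mem_projJoin' hw2 _ _ m2q⟩,
      ⟨mk_mem_projJoin' hw3 _ _ m3p, mk_mem_projJoin' hw3 _ _ m3q⟩, ?_⟩
    refine ⟨span k {α₂ • p₂.rep - α₃ • p₃.rep, α₃ • p₃.rep - α₁ • p₁.rep},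
      rank_span_pair_le' _ _, ?_⟩
    intro z hz
    simp only [Set.mem_insert_iff, Set.mem_singleton_iff] at hz
    rcases hz with rfl | rfl | rfl
    · rw [Projectivization.submodule_mk]
      exact (span_singleton_le_iff_mem _ _).2 (subset_span (by simp))
    · rw [Projectivization.submodule_mk]
      exact (span_singleton_le_iff_mem _ _).2 (subset_span (by simp))
    · rw [Projectivization.submodule_mk]
      refine (span_singleton_le_iff_mem _ _).2 ?_
      rw [show α₁ • p₁.rep - α₂ • p₂.rep =
          -(α₂ • p₂.rep - α₃ • p₃.rep) - (α₃ • p₃.rep - α₁ • p₁.rep) by module]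
      exact sub_mem (neg_mem (subset_span (by simp))) (subset_span (by simp))
  · rintro ⟨r₁, r₂, r₃, ⟨h1u, h1v⟩, ⟨h2u, h2v⟩, ⟨h3u, h3v⟩, W, hW, hmem⟩
    have hz1u := (mem_projJoin_iff' _ _ _).1 h1u
    have hz1v := (mem_projJoin_iff' _ _ _).1 h1v
    have hz2u := (mem_projJoin_iff' _ _ _).1 h2u
    have hz2v := (mem_projJoin_iff' _ _ _).1 h2v
    have hz3u := (mem_projJoin_iff' _ _ _).1 h3u
    have hz3v := (mem_projJoin_iff' _ _ _).1 h3v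
    have hrW : ∀ r ∈ ({r₁, r₂, r₃} : Set (ℙ k V)), r.rep ∈ W := fun r hr =>
      (span_singleton_le_iff_mem _ _).1
        (by rw [← Projectivization.submodule_eq]; exact hmem r hr)
    obtain ⟨g, hg, i, hgi⟩ := Fintype.not_linearIndependent_iff.1
      (not_indep_of_rank_le' hW (hrW r₁ (by simp)) (hrW r₂ (by simp)) (hrW r₃ (by simp)))
    simp only [Fin.sum_univ_three, Matrix.cons_val_zero, Matrix.cons_val_one, Matrix.head_cons,
      Matrix.cons_val_two, Matrix.tail_cons] at hg
    obtain ⟨s₂, s₃, hs⟩ := Submodule.mem_span_pair.1 (Submodule.smul_mem _ (g 0) hz1u)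
    obtain ⟨s₂', s₃', hs'⟩ := Submodule.mem_span_pair.1 (Submodule.smul_mem _ (g 0) hz1v)
    obtain ⟨t₃, t₁, ht⟩ := Submodule.mem_span_pair.1 (Submodule.smul_mem _ (g 1) hz2u)
    obtain ⟨t₃', t₁', ht'⟩ := Submodule.mem_span_pair.1 (Submodule.smul_mem _ (g 1) hz2v)
    obtain ⟨c₁, c₂, hc⟩ := Submodule.mem_span_pair.1 (Submodule.smul_mem _ (g 2) hz3u)
    obtain ⟨c₁', c₂', hc'⟩ := Submodule.mem_span_pair.1 (Submodule.smul_mem _ (g 2) hz3v)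
    have hrel : (t₁ + c₁) • p₁.rep + (s₂ + c₂) • p₂.rep + (s₃ + t₃) • p₃.rep = 0 := by
      linear_combination (norm := module) hs + ht + hc + hg
    obtain ⟨e1, e2, e3⟩ := zero_coeffs' hu hrel
    have hrel' : (t₁' + c₁') • q₁.rep + (s₂' + c₂') • q₂.rep + (s₃' + t₃') • q₃.rep = 0 := by
      linear_combination (norm := module) hs' + ht' + hc' + hg
    obtain ⟨f1, f2, f3⟩ := zero_coeffs' hv hrel'
    have ec1 : c₁ = -t₁ := by linear_combination e1
    have ec2 : c₂ = -s₂ := by linear_combination e2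
    have et3 : t₃ = -s₃ := by linear_combination e3
    have fc1 : c₁' = -t₁' := by linear_combination f1
    have fc2 : c₂' = -s₂' := by linear_combination f2
    have ft3 : t₃' = -s₃' := by linear_combination f3
    rw [ec1, ec2] at hc
    rw [fc1, fc2] at hc'
    rw [et3] at ht
    rw [ft3] at ht'
    -- the common point
    have id2 : s₂ • p₂.rep - s₂' • q₂.rep = t₁' • q₁.rep - t₁ • p₁.rep := by
      linear_combination (norm := module) hc' - hc
    have id3 : (-s₃) • p₃.rep + s₃' • q₃.rep = t₁' • q₁.rep - t₁ • p₁.rep := by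
      linear_combination (norm := module) ht - ht'
    have hx : t₁' • q₁.rep - t₁ • p₁.rep ≠ 0 := by
      fin_cases i
      · have hgi' : g 0 ≠ 0 := by simpa using hgi
        have hne0 : g 0 • r₁.rep ≠ 0 := smul_ne_zero hgi' r₁.rep_nonzero
        have key := key_ne' q₂.rep_nonzero q₃.rep_nonzero (hs.trans hs'.symm)
          (by rw [hs]; exact hne0) (hne_of_ne' h2) (hne_of_ne' h3)
        rwa [id2] at key
      · have hgi' : g 1 ≠ 0 := by simpa using hgi
        have hne0 : g 1 • r₂.rep ≠ 0 := smul_ne_zero hgi' r₂.rep_nonzero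
        have key := key_ne' q₃.rep_nonzero q₁.rep_nonzero (ht.trans ht'.symm)
          (by rw [ht]; exact hne0) (hne_of_ne' h3) (hne_of_ne' h1)
        rw [show (-s₃) • p₃.rep - (-s₃') • q₃.rep =
          (-s₃) • p₃.rep + s₃' • q₃.rep by module, id3] at key
        exact key
      · have hgi' : g 2 ≠ 0 := by simpa using hgi
        have hne0 : g 2 • r₃.rep ≠ 0 := smul_ne_zero hgi' r₃.rep_nonzero
        have key := key_ne' q₁.rep_nonzero q₂.rep_nonzero (hc.trans hc'.symm)
          (by rw [hc]; exact hne0) (hne_of_ne' h1) (hne_of_ne' h2)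
        rwa [show (-t₁) • p₁.rep - (-t₁') • q₁.rep =
          t₁' • q₁.rep - t₁ • p₁.rep by module] at key
    have mx1 : t₁' • q₁.rep - t₁ • p₁.rep ∈ span k {p₁.rep, q₁.rep} :=
      Submodule.mem_span_pair.2 ⟨-t₁, t₁', by module⟩
    have mx2 : t₁' • q₁.rep - t₁ • p₁.rep ∈ span k {p₂.rep, q₂.rep} :=
      Submodule.mem_span_pair.2 ⟨s₂, -s₂', by linear_combination (norm := module) hc' - hc⟩
    have mx3 : t₁' • q₁.rep - t₁ • p₁.rep ∈ span k {p₃.rep, q₃.rep} :=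
      Submodule.mem_span_pair.2 ⟨-s₃, s₃', by linear_combination (norm := module) ht - ht'⟩
    exact ⟨Projectivization.mk k _ hx,
      ⟨⟨mk_mem_projJoin' hx _ _ mx1, mk_mem_projJoin' hx _ _ mx2⟩,
        mk_mem_projJoin' hx _ _ mx3⟩⟩
end
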